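/- arXiv:1907.03375 — 5 statements merged into one kernel-verified Lean document; each statement's English description precedes it below -/
import Mathlib

section
/- Let f(β) = √β·∫₀^{√β} e^{−t²/2} dt + e^{−β/2} for β > 0. Then f is differentiable on (0,∞) with f'(β) = (1/(2√β))·∫₀^{√β} e^{−t²/2} dt; f' is strictly decreasing on (0,∞); f'(β) → 1/2 as β → 0⁺ and f'(β) → 0 as β → ∞; f(β) → 1 as β → 0⁺ and f(β) → ∞ as β → ∞; f' > 0 so f is strictly increasing and concave; and for every α with 0 < α < 1/2 there is a unique β > 0 such that f'(β) = α. -/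
open Filter

open MeasureTheory

/-- `f(β) = √β·∫₀^{√β} e^{−t²/2} dt + e^{−β/2}`. -/
noncomputable def fFun (β : ℝ) : ℝ :=
  Real.sqrt β * (∫ t in (0:ℝ)..Real.sqrt β, Real.exp (-t^2/2)) + Real.exp (-β/2)

/-- `f'(β) = (1/(2√β))·∫₀^{√β} e^{−t²/2} dt`. -/
noncomputable def fDeriv (β : ℝ) : ℝ :=
  (1/(2*Real.sqrt β)) * ∫ t in (0:ℝ)..Real.sqrt β, Real.exp (-t^2/2)

noncomputable def gInt (x : ℝ) : ℝ := ∫ t in (0:ℝ)..x, Real.exp (-t^2/2)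

lemma contK : Continuous fun t : ℝ => Real.exp (-t^2/2) := by fun_prop

lemma intK (a b : ℝ) : IntervalIntegrable (fun t => Real.exp (-t^2/2)) volume a b :=
  contK.intervalIntegrable a b

lemma g_hasDeriv (x : ℝ) : HasDerivAt gInt (Real.exp (-x^2/2)) x :=
  intervalIntegral.integral_hasDerivAt_right (intK 0 x)
    contK.aestronglyMeasurable.stronglyMeasurableAtFilter contK.continuousAt

lemma g_cont : Continuous gInt := by
  rw [continuous_iff_continuousAt]
  exact fun x => (g_hasDeriv x).continuousAt

lemma g_zero : gInt 0 = 0 := intervalIntegral.integral_same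

lemma g_pos {x : ℝ} (hx : 0 < x) : 0 < gInt x :=
  intervalIntegral.intervalIntegral_pos_of_pos (intK 0 x) (fun t => Real.exp_pos _) hx

lemma g_lt {a : ℝ} (ha : 0 < a) : a * Real.exp (-a^2/2) < gInt a := by
  have h : 0 < ∫ t in (0:ℝ)..a, (Real.exp (-t^2/2) - Real.exp (-a^2/2)) := by
    apply intervalIntegral.intervalIntegral_pos_of_pos_on
    · exact ((intK 0 a).sub (intervalIntegrable_const))
    · intro t ht
      have : -a^2/2 < -t^2/2 := by nlinarith [ht.1, ht.2]
      simpa using Real.exp_lt_exp.2 this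
    · exact ha
  rw [intervalIntegral.integral_sub (intK 0 a) intervalIntegrable_const,
    intervalIntegral.integral_const] at h
  simp only [sub_zero, smul_eq_mul] at h
  rw [gInt]
  linarith [h]

lemma g_add (a b : ℝ) : gInt b = gInt a + ∫ t in a..b, Real.exp (-t^2/2) := by
  rw [gInt, gInt, intervalIntegral.integral_add_adjacent_intervals (intK 0 a) (intK a b)]

lemma g_mono : Monotone gInt := by
  intro a b hab
  rw [g_add a b]
  have : 0 ≤ ∫ t in a..b, Real.exp (-t^2/2) :=
    intervalIntegral.integral_nonneg hab (fun t _ => (Real.exp_pos _).le)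
  linarith

lemma g_nonneg {x : ℝ} (hx : 0 ≤ x) : 0 ≤ gInt x := by
  have := g_mono hx
  rwa [g_zero] at this

lemma fFun_eq (β : ℝ) : fFun β = Real.sqrt β * gInt (Real.sqrt β) + Real.exp (-β/2) := rfl

lemma fDeriv_eq (β : ℝ) : fDeriv β = (1/(2*Real.sqrt β)) * gInt (Real.sqrt β) := rfl

lemma hasDeriv_fFun {β : ℝ} (hβ : 0 < β) : HasDerivAt fFun (fDeriv β) β := by
  have hsne : Real.sqrt β ≠ 0 := (Real.sqrt_pos.2 hβ).ne'
  have hs : HasDerivAt Real.sqrt (1/(2*Real.sqrt β)) β := Real.hasDerivAt_sqrt hβ.ne'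
  have hsq : Real.sqrt β ^ 2 = β := Real.sq_sqrt hβ.le
  have hg : HasDerivAt (fun b => gInt (Real.sqrt b))
      (Real.exp (-β/2) * (1/(2*Real.sqrt β))) β := by
    have := (g_hasDeriv (Real.sqrt β)).comp β hs
    simpa [hsq, Function.comp_def] using this
  have h1 : HasDerivAt (fun b => Real.sqrt b * gInt (Real.sqrt b))
      ((1/(2*Real.sqrt β)) * gInt (Real.sqrt β)
        + Real.sqrt β * (Real.exp (-β/2) * (1/(2*Real.sqrt β)))) β := hs.mul hg
  have h2 : HasDerivAt (fun b : ℝ => Real.exp (-b/2)) (Real.exp (-β/2) * (-1/2)) β := by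
    have hin : HasDerivAt (fun b : ℝ => -b/2) (-1/2) β := by
      simpa using ((hasDerivAt_id β).neg.div_const 2)
    exact hin.exp
  have h3 := h1.add h2
  have heq : (1/(2*Real.sqrt β)) * gInt (Real.sqrt β)
        + Real.sqrt β * (Real.exp (-β/2) * (1/(2*Real.sqrt β)))
        + Real.exp (-β/2) * (-1/2) = fDeriv β := by
    rw [fDeriv_eq]
    field_simp
    ring
  rw [heq] at h3
  exact h3

lemma strictAnti_fDeriv : StrictAntiOn fDeriv (Set.Ioi 0) := by
  intro a ha b hb hab
  simp only [Set.mem_Ioi] at ha hb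
  set x := Real.sqrt a with hxd
  set y := Real.sqrt b with hyd
  have hx : 0 < x := Real.sqrt_pos.2 ha
  have hy : 0 < y := Real.sqrt_pos.2 hb
  have hxy : x < y := Real.sqrt_lt_sqrt ha.le hab
  have hbound : gInt y - gInt x ≤ (y - x) * Real.exp (-x^2/2) := by
    rw [g_add x y]
    have h1 : ∫ t in x..y, Real.exp (-t^2/2) ≤ ∫ t in x..y, Real.exp (-x^2/2) := by
      apply intervalIntegral.integral_mono_on hxy.le (intK x y) intervalIntegrable_const
      intro t ht
      apply Real.exp_le_exp.2
      nlinarith [ht.1, ht.2]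
    rw [intervalIntegral.integral_const, smul_eq_mul] at h1
    linarith
  have hglt := g_lt hx
  have hkey : x * gInt y < y * gInt x := by
    nlinarith [mul_le_mul_of_nonneg_left hbound hx.le,
      mul_lt_mul_of_pos_left hglt (sub_pos.2 hxy)]
  rw [fDeriv_eq, fDeriv_eq, ← hxd, ← hyd, one_div_mul_eq_div, one_div_mul_eq_div,
    div_lt_div_iff₀ (by positivity) (by positivity)]
  nlinarith

lemma sqrt_tendsto_zero :
    Tendsto Real.sqrt (nhdsWithin 0 (Set.Ioi 0)) (nhdsWithin 0 (Set.Ioi 0)) := by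
  apply tendsto_nhdsWithin_of_tendsto_nhds_of_eventually_within
  · have := (Real.continuous_sqrt.continuousAt (x := 0)).tendsto
    simpa using this.mono_left nhdsWithin_le_nhds
  · filter_upwards [self_mem_nhdsWithin] with x hx
    exact Real.sqrt_pos.2 hx

lemma tends_fDeriv_zero : Tendsto fDeriv (nhdsWithin 0 (Set.Ioi 0)) (nhds (1/2)) := by
  have hslope : Tendsto (fun s => gInt s / s) (nhdsWithin 0 (Set.Ioi 0)) (nhds 1) := by
    have h := hasDerivAt_iff_tendsto_slope.1 (g_hasDeriv 0)
    simp only [ne_eq, neg_zero, zero_pow, Real.exp_zero, OfNat.ofNat_ne_zero, not_false_eq_true] at h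
    norm_num at h
    have h2 : Tendsto (slope gInt 0) (nhdsWithin 0 (Set.Ioi 0)) (nhds 1) :=
      h.mono_left (nhdsWithin_mono 0 (fun x hx => ne_of_gt hx))
    refine h2.congr (fun s => ?_)
    rw [slope_def_field, g_zero]
    ring
  have hcomp := hslope.comp sqrt_tendsto_zero
  have : Tendsto (fun β => (1/2 : ℝ) * (gInt (Real.sqrt β) / Real.sqrt β))
      (nhdsWithin 0 (Set.Ioi 0)) (nhds ((1/2) * 1)) := hcomp.const_mul (1/2)
  norm_num at this
  refine this.congr (fun β => ?_)
  rw [fDeriv_eq]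
  ring

lemma B_def : ∃ B : ℝ, 0 ≤ B ∧ ∀ s, 0 ≤ s → gInt s ≤ B := by
  have hint : Integrable (fun t : ℝ => Real.exp (-t^2/2)) := by
    have h := integrable_exp_neg_mul_sq (by norm_num : (0:ℝ) < 1/2)
    refine h.congr ?_
    filter_upwards with x
    congr 1
    ring
  refine ⟨∫ t : ℝ, Real.exp (-t^2/2), integral_nonneg (fun t => (Real.exp_pos _).le), ?_⟩
  intro s hs
  rw [gInt, intervalIntegral.integral_of_le hs]
  exact setIntegral_le_integral hint (Eventually.of_forall fun t => (Real.exp_pos _).le)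

lemma fDeriv_nonneg (β : ℝ) : 0 ≤ fDeriv β := by
  rw [fDeriv_eq]
  have h1 : 0 ≤ Real.sqrt β := Real.sqrt_nonneg β
  exact mul_nonneg (by positivity) (g_nonneg h1)

lemma tends_fDeriv_top : Tendsto fDeriv atTop (nhds 0) := by
  obtain ⟨B, hB0, hB⟩ := B_def
  have hsq0 : Tendsto Real.sqrt atTop atTop := by
    apply tendsto_atTop_atTop_of_monotone (fun a b hab => Real.sqrt_le_sqrt hab)
    intro b
    exact ⟨(max b 0)^2, by rw [Real.sqrt_sq (le_max_right b 0)]; exact le_max_left b 0⟩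
  have hsqrt : Tendsto (fun β : ℝ => 2 * Real.sqrt β) atTop atTop :=
    hsq0.const_mul_atTop (by norm_num : (0:ℝ) < 2)
  have h1 : Tendsto (fun β : ℝ => B * (1/(2*Real.sqrt β))) atTop (nhds 0) := by
    have := hsqrt.inv_tendsto_atTop.const_mul B
    simpa [one_div, mul_zero] using this
  apply tendsto_of_tendsto_of_tendsto_of_le_of_le tendsto_const_nhds h1 fDeriv_nonneg
  intro β
  rw [fDeriv_eq]
  have h2 : gInt (Real.sqrt β) ≤ B := hB _ (Real.sqrt_nonneg β)
  have h3 : 0 ≤ 1/(2*Real.sqrt β) := by positivity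
  calc (1/(2*Real.sqrt β)) * gInt (Real.sqrt β) ≤ (1/(2*Real.sqrt β)) * B :=
        mul_le_mul_of_nonneg_left h2 h3
    _ = B * (1/(2*Real.sqrt β)) := mul_comm _ _

lemma tends_fFun_zero : Tendsto fFun (nhdsWithin 0 (Set.Ioi 0)) (nhds 1) := by
  have hc : Continuous fFun := by
    show Continuous fun β => Real.sqrt β * gInt (Real.sqrt β) + Real.exp (-β/2)
    exact (Real.continuous_sqrt.mul (g_cont.comp Real.continuous_sqrt)).add
      (Real.continuous_exp.comp (by fun_prop))
  have h0 : fFun 0 = 1 := by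
    rw [fFun_eq]
    simp [g_zero]
  have := hc.continuousAt (x := 0) |>.tendsto
  rw [h0] at this
  exact this.mono_left nhdsWithin_le_nhds

lemma tends_fFun_top : Tendsto fFun atTop atTop := by
  have hg1 : 0 < gInt 1 := g_pos one_pos
  have hsq0 : Tendsto Real.sqrt atTop atTop := by
    apply tendsto_atTop_atTop_of_monotone (fun a b hab => Real.sqrt_le_sqrt hab)
    intro b
    exact ⟨(max b 0)^2, by rw [Real.sqrt_sq (le_max_right b 0)]; exact le_max_left b 0⟩
  have h : Tendsto (fun β => Real.sqrt β * gInt 1) atTop atTop :=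
    hsq0.atTop_mul_const hg1
  apply tendsto_atTop_mono' atTop _ h
  filter_upwards [eventually_ge_atTop (1:ℝ)] with β hβ
  have h1 : (1:ℝ) ≤ Real.sqrt β := by
    rw [show (1:ℝ) = Real.sqrt 1 by simp]
    exact Real.sqrt_le_sqrt hβ
  have h2 := g_mono h1
  have h3 := (Real.exp_pos (-β/2)).le
  rw [fFun_eq]
  nlinarith [Real.sqrt_nonneg β]

lemma fDeriv_pos {β : ℝ} (hβ : 0 < β) : 0 < fDeriv β := by
  rw [fDeriv_eq]
  have hs : 0 < Real.sqrt β := Real.sqrt_pos.2 hβ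
  exact mul_pos (by positivity) (g_pos hs)

lemma fFun_contOn : ContinuousOn fFun (Set.Ioi 0) :=
  fun x hx => ((hasDeriv_fFun hx).continuousAt).continuousWithinAt

lemma strictMono_fFun : StrictMonoOn fFun (Set.Ioi 0) := by
  apply strictMonoOn_of_deriv_pos (convex_Ioi 0) fFun_contOn
  intro x hx
  rw [interior_Ioi] at hx
  rw [(hasDeriv_fFun hx).deriv]
  exact fDeriv_pos hx

lemma concave_fFun : ConcaveOn ℝ (Set.Ioi 0) fFun := by
  apply AntitoneOn.concaveOn_of_deriv (convex_Ioi 0) fFun_contOn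
  · rw [interior_Ioi]
    exact fun x hx => ((hasDeriv_fFun hx).differentiableAt).differentiableWithinAt
  · rw [interior_Ioi]
    intro a ha b hb hab
    rw [(hasDeriv_fFun ha).deriv, (hasDeriv_fFun hb).deriv]
    rcases eq_or_lt_of_le hab with h | h
    · rw [h]
    · exact (strictAnti_fDeriv ha hb h).le

lemma fDeriv_contOn : ContinuousOn fDeriv (Set.Ioi 0) := by
  intro x hx
  simp only [Set.mem_Ioi] at hx
  have hs : (0:ℝ) < Real.sqrt x := Real.sqrt_pos.2 hx
  apply ContinuousAt.continuousWithinAt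
  show ContinuousAt (fun β => (1/(2*Real.sqrt β)) * gInt (Real.sqrt β)) x
  apply ContinuousAt.mul
  · apply ContinuousAt.div continuousAt_const
    · exact (continuous_const.mul Real.continuous_sqrt).continuousAt
    · positivity
  · exact (g_cont.comp Real.continuous_sqrt).continuousAt

lemma exu {α : ℝ} (hα0 : 0 < α) (hα : α < 1/2) : ∃! β : ℝ, 0 < β ∧ fDeriv β = α := by
  obtain ⟨a, haα, ha⟩ :=
    ((tends_fDeriv_zero.eventually (eventually_gt_nhds hα)).and self_mem_nhdsWithin).exists
  obtain ⟨b, hbα, hba⟩ :=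
    ((tends_fDeriv_top.eventually (eventually_lt_nhds hα0)).and (eventually_gt_atTop a)).exists
  have ha : (0:ℝ) < a := ha
  have hab : a ≤ b := hba.le
  have hsub : Set.Icc a b ⊆ Set.Ioi 0 := fun t ht => lt_of_lt_of_le ha ht.1
  obtain ⟨β, hβmem, hβ⟩ := intermediate_value_Icc' hab (fDeriv_contOn.mono hsub)
    (Set.mem_Icc.2 ⟨hbα.le, haα.le⟩)
  have hβpos : 0 < β := lt_of_lt_of_le ha hβmem.1
  refine ⟨β, ⟨hβpos, hβ⟩, ?_⟩
  rintro y ⟨hy, hyα⟩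
  exact strictAnti_fDeriv.injOn (Set.mem_Ioi.2 hy) (Set.mem_Ioi.2 hβpos) (by rw [hyα, hβ])

theorem fFun_properties :
    (∀ β : ℝ, 0 < β → HasDerivAt fFun (fDeriv β) β) ∧
    StrictAntiOn fDeriv (Set.Ioi 0) ∧
    Tendsto fDeriv (nhdsWithin 0 (Set.Ioi 0)) (nhds (1/2)) ∧
    Tendsto fDeriv atTop (nhds 0) ∧
    Tendsto fFun (nhdsWithin 0 (Set.Ioi 0)) (nhds 1) ∧
    Tendsto fFun atTop atTop ∧
    (∀ β : ℝ, 0 < β → 0 < fDeriv β) ∧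
    StrictMonoOn fFun (Set.Ioi 0) ∧
    ConcaveOn ℝ (Set.Ioi 0) fFun ∧
    (∀ α : ℝ, 0 < α → α < 1/2 → ∃! β : ℝ, 0 < β ∧ fDeriv β = α) := by
  exact ⟨fun _ h => hasDeriv_fFun h, strictAnti_fDeriv, tends_fDeriv_zero, tends_fDeriv_top,
    tends_fFun_zero, tends_fFun_top, fun _ h => fDeriv_pos h, strictMono_fFun, concave_fFun,
    fun _ h1 h2 => exu h1 h2⟩
end

section
/- Let f(β) = √β·∫₀^{√β} e^{−t²/2} dt + e^{−β/2} and g(β) = β·f(1/β) = √β·∫₀^{1/√β} e^{−t²/2} dt + β·e^{−1/(2β)} for β > 0. Then g is differentiable on (0,∞) with g'(β) = f(1/β) − (1/β)·f'(1/β) = (1/(2√β))·∫₀^{1/√β} e^{−t²/2} dt + e^{−1/(2β)}; g' is strictly decreasing on (0,∞); g'(β) → ∞ as β → 0⁺ and g'(β) → 1 as β → ∞; g is concave; and for every α > 1 there is a unique β > 0 such that g'(β) = α. -/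
open Filter

/-- `g(β) = β·f(1/β)`. -/
noncomputable def gFun (β : ℝ) : ℝ := β * fFun (1/β)

/-- `g'(β) = (1/(2√β))·∫₀^{1/√β} e^{−t²/2} dt + e^{−1/(2β)}`. -/
noncomputable def gDeriv (β : ℝ) : ℝ :=
  (1/(2*Real.sqrt β)) * (∫ t in (0:ℝ)..(1/Real.sqrt β), Real.exp (-t^2/2))
    + Real.exp (-1/(2*β))

noncomputable def HH (x : ℝ) : ℝ := ∫ t in (0:ℝ)..x, Real.exp (-t^2/2)

lemma contE : Continuous (fun t : ℝ => Real.exp (-t^2/2)) := by continuity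

lemma HH_hasDerivAt (x : ℝ) : HasDerivAt HH (Real.exp (-x^2/2)) x :=
  intervalIntegral.integral_hasDerivAt_right (contE.intervalIntegrable _ _)
    contE.aestronglyMeasurable.stronglyMeasurableAtFilter contE.continuousAt

lemma HH_cont : Continuous HH :=
  continuous_iff_continuousAt.2 fun x => (HH_hasDerivAt x).continuousAt

lemma HH_mono : StrictMono HH :=
  strictMono_of_deriv_pos (fun x => by rw [(HH_hasDerivAt x).deriv]; positivity)

lemma HH_key {x : ℝ} (hx : 0 < x) : x * Real.exp (-x^2/2) < HH x := by
  have h : (0:ℝ) < ∫ t in (0:ℝ)..x, (Real.exp (-t^2/2) - Real.exp (-x^2/2)) := by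
    apply intervalIntegral.intervalIntegral_pos_of_pos_on
    · exact ((contE.sub continuous_const).intervalIntegrable _ _)
    · intro t ht
      have : t^2 < x^2 := by nlinarith [ht.1, ht.2]
      simp only [sub_pos]
      apply Real.exp_lt_exp.2; linarith
    · exact hx
  rw [intervalIntegral.integral_sub (contE.intervalIntegrable _ _) (intervalIntegrable_const)] at h
  simp only [intervalIntegral.integral_const, smul_eq_mul, sub_zero] at h
  unfold HH
  linarith [h]

noncomputable def hFun (x : ℝ) : ℝ := x/2 * HH x + Real.exp (-x^2/2)

lemma hFun_hasDerivAt (x : ℝ) :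
    HasDerivAt hFun (1/2 * (HH x - x * Real.exp (-x^2/2))) x := by
  have h1 : HasDerivAt (fun x : ℝ => x/2 * HH x)
      (1/2 * HH x + x/2 * Real.exp (-x^2/2)) x :=
    ((hasDerivAt_id x).div_const 2).mul (HH_hasDerivAt x)
  have h2 : HasDerivAt (fun x : ℝ => Real.exp (-x^2/2))
      (Real.exp (-x^2/2) * (-x)) x := by
    have : HasDerivAt (fun x : ℝ => -x^2/2) (-x) x := by
      have := ((hasDerivAt_pow 2 x).neg).div_const 2
      simpa using this.congr_deriv (by ring)
    exact (Real.hasDerivAt_exp _).comp x this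
  have := h1.add h2
  exact this.congr_deriv (by ring)

lemma hFun_mono : StrictMonoOn hFun (Set.Ici 0) := by
  apply strictMonoOn_of_deriv_pos (convex_Ici 0)
  · exact (((continuous_id.div_const 2).mul HH_cont).add contE).continuousOn
  · intro x hx
    rw [interior_Ici] at hx
    rw [(hFun_hasDerivAt x).deriv]
    have := HH_key hx
    linarith

lemma hFun_zero : hFun 0 = 1 := by simp [hFun, HH]

lemma hFun_cont : Continuous hFun :=
  ((continuous_id.div_const 2).mul HH_cont).add contE



lemma gDeriv_eq {β : ℝ} (hβ : 0 < β) : gDeriv β = hFun (1/Real.sqrt β) := by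
  have hs : Real.sqrt β ≠ 0 := (Real.sqrt_pos.2 hβ).ne'
  unfold gDeriv hFun HH
  rw [show -(1/Real.sqrt β)^2/2 = -1/(2*β) by
    rw [div_pow, one_pow, Real.sq_sqrt hβ.le]; ring]
  ring

lemma gFun_eq {β : ℝ} (hβ : 0 < β) :
    gFun β = Real.sqrt β * HH (1/Real.sqrt β) + β * Real.exp (-1/(2*β)) := by
  have hs : Real.sqrt β ≠ 0 := (Real.sqrt_pos.2 hβ).ne'
  unfold gFun fFun HH
  rw [show Real.sqrt (1/β) = 1/Real.sqrt β by rw [one_div, Real.sqrt_inv, one_div]]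
  rw [show -(1/β)/2 = -1/(2*β) by ring]
  have h2 : β * (1/Real.sqrt β) = Real.sqrt β := by
    rw [mul_one_div, div_eq_iff hs, Real.mul_self_sqrt hβ.le]
  rw [mul_add, ← mul_assoc, h2]

lemma gFun_hasDerivAt {β : ℝ} (hβ : 0 < β) : HasDerivAt gFun (gDeriv β) β := by
  have hs : 0 < Real.sqrt β := Real.sqrt_pos.2 hβ
  have hs2 : Real.sqrt β ^ 2 = β := Real.sq_sqrt hβ.le
  have hsqrt : HasDerivAt Real.sqrt (1/(2*Real.sqrt β)) β := Real.hasDerivAt_sqrt hβ.ne'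
  have hinv : HasDerivAt (fun b => 1/Real.sqrt b)
      (-(1/(2*Real.sqrt β))/(Real.sqrt β)^2) β := by
    have := hsqrt.inv hs.ne'
    simpa [one_div, Pi.inv_def] using this
  have hcomp : HasDerivAt (fun b => HH (1/Real.sqrt b))
      (Real.exp (-(1/Real.sqrt β)^2/2) * (-(1/(2*Real.sqrt β))/(Real.sqrt β)^2)) β :=
    by have := (HH_hasDerivAt (1/Real.sqrt β)).comp β hinv; exact this
  have hterm1 : HasDerivAt (fun b => Real.sqrt b * HH (1/Real.sqrt b))
      (1/(2*Real.sqrt β) * HH (1/Real.sqrt β)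
        + Real.sqrt β * (Real.exp (-(1/Real.sqrt β)^2/2) * (-(1/(2*Real.sqrt β))/(Real.sqrt β)^2))) β :=
    hsqrt.mul hcomp
  have hinner : HasDerivAt (fun b : ℝ => -1/(2*b)) (1/(2*β^2)) β := by
    have h1 : HasDerivAt (fun b : ℝ => 2*b) 2 β := by simpa using (hasDerivAt_id β).const_mul (2:ℝ)
    have h2 := (h1.inv (by positivity)).neg
    have heq : (fun b : ℝ => -1/(2*b)) = fun b : ℝ => -(2*b)⁻¹ := by
      funext b; rw [neg_div, one_div]
    rw [heq]
    refine h2.congr_deriv ?_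
    field_simp
  have hexp : HasDerivAt (fun b : ℝ => Real.exp (-1/(2*b)))
      (Real.exp (-1/(2*β)) * (1/(2*β^2))) β := (Real.hasDerivAt_exp _).comp β hinner
  have hterm2 : HasDerivAt (fun b : ℝ => b * Real.exp (-1/(2*b)))
      (1 * Real.exp (-1/(2*β)) + β * (Real.exp (-1/(2*β)) * (1/(2*β^2)))) β :=
    (hasDerivAt_id β).mul hexp
  have hG := hterm1.add hterm2
  have hEq : gFun =ᶠ[nhds β]
      (fun b => Real.sqrt b * HH (1/Real.sqrt b) + b * Real.exp (-1/(2*b))) := by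
    filter_upwards [isOpen_Ioi.mem_nhds hβ] with b hb
    exact gFun_eq hb
  have hfinal := hG.congr_of_eventuallyEq hEq
  refine hfinal.congr_deriv ?_
  rw [show -(1/Real.sqrt β)^2/2 = -1/(2*β) by rw [div_pow, one_pow, hs2]; ring]
  unfold gDeriv HH
  rw [hs2]
  field_simp
  ring

lemma part3 {β : ℝ} (hβ : 0 < β) : gDeriv β = fFun (1/β) - (1/β) * fDeriv (1/β) := by
  have hs : Real.sqrt β ≠ 0 := (Real.sqrt_pos.2 hβ).ne'
  have hss : Real.sqrt β * Real.sqrt β = β := Real.mul_self_sqrt hβ.le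
  unfold gDeriv fFun fDeriv
  rw [show Real.sqrt (1/β) = 1/Real.sqrt β by rw [one_div, Real.sqrt_inv, one_div]]
  rw [show -(1/β)/2 = -1/(2*β) by ring]
  simp only [neg_div]
  field_simp
  linear_combination (∫ t in (0:ℝ)..(1/Real.sqrt β), Real.exp (-(t^2/2))) * hss

lemma gDeriv_anti : StrictAntiOn gDeriv (Set.Ioi 0) := by
  intro a ha b hb hab
  rw [Set.mem_Ioi] at ha hb
  rw [gDeriv_eq ha, gDeriv_eq hb]
  apply hFun_mono (by positivity : (0:ℝ) ≤ 1/Real.sqrt b) (by positivity : (0:ℝ) ≤ 1/Real.sqrt a)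
  exact one_div_lt_one_div_of_lt (Real.sqrt_pos.2 ha) (Real.sqrt_lt_sqrt ha.le hab)

lemma invsqrt_tendsto_zero :
    Tendsto (fun β : ℝ => 1/Real.sqrt β) (nhdsWithin 0 (Set.Ioi 0)) atTop := by
  have h1 : Tendsto Real.sqrt (nhdsWithin 0 (Set.Ioi 0)) (nhdsWithin 0 (Set.Ioi 0)) := by
    apply tendsto_nhdsWithin_of_tendsto_nhds_of_eventually_within
    · have h0 : Tendsto Real.sqrt (nhds 0) (nhds 0) := by
        simpa using Real.continuous_sqrt.tendsto 0
      exact h0.mono_left nhdsWithin_le_nhds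
    · filter_upwards [self_mem_nhdsWithin] with x hx
      exact Real.sqrt_pos.2 hx
  simpa [one_div, Function.comp_def] using tendsto_inv_nhdsGT_zero.comp h1

lemma invsqrt_tendsto_atTop : Tendsto (fun β : ℝ => 1/Real.sqrt β) atTop (nhds 0) := by
  have h1 : Tendsto Real.sqrt atTop atTop := by
    apply tendsto_atTop_atTop_of_monotone (fun a b h => Real.sqrt_le_sqrt h)
    intro b
    exact ⟨(max b 0)^2, by rw [Real.sqrt_sq (le_max_right b 0)]; exact le_max_left b 0⟩
  simpa [one_div, Pi.inv_def] using h1.inv_tendsto_atTop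

lemma HH_one_pos : 0 < HH 1 := by
  have := HH_mono (show (0:ℝ) < 1 by norm_num)
  simpa [HH] using this

lemma hFun_tendsto_atTop : Tendsto hFun atTop atTop := by
  apply tendsto_atTop_mono' atTop (show ∀ᶠ x in atTop, HH 1/2 * x ≤ hFun x by
    filter_upwards [eventually_ge_atTop 1] with x hx
    have h1 : HH 1 ≤ HH x := HH_mono.le_iff_le.2 hx
    have h2 : 0 < Real.exp (-x^2/2) := Real.exp_pos _
    have h0 := HH_one_pos
    unfold hFun
    nlinarith)
  exact Tendsto.const_mul_atTop (by linarith [HH_one_pos]) tendsto_id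

lemma gDeriv_tendsto_top : Tendsto gDeriv (nhdsWithin 0 (Set.Ioi 0)) atTop := by
  have := hFun_tendsto_atTop.comp invsqrt_tendsto_zero
  apply this.congr'
  filter_upwards [self_mem_nhdsWithin] with β hβ
  exact (gDeriv_eq hβ).symm

lemma gDeriv_tendsto_one : Tendsto gDeriv atTop (nhds 1) := by
  have h := (hFun_cont.tendsto 0).comp invsqrt_tendsto_atTop
  rw [hFun_zero] at h
  apply h.congr'
  filter_upwards [eventually_gt_atTop 0] with β hβ
  exact (gDeriv_eq hβ).symm

lemma gFun_concave : ConcaveOn ℝ (Set.Ioi 0) gFun := by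
  apply AntitoneOn.concaveOn_of_deriv (convex_Ioi 0)
  · exact fun β hβ => (gFun_hasDerivAt hβ).continuousAt.continuousWithinAt
  · rw [interior_Ioi]
    exact fun β hβ => (gFun_hasDerivAt hβ).differentiableAt.differentiableWithinAt
  · rw [interior_Ioi]
    intro x hx y hy hxy
    rw [(gFun_hasDerivAt hx).deriv, (gFun_hasDerivAt hy).deriv]
    exact gDeriv_anti.antitoneOn hx hy hxy

lemma gDeriv_contOn : ContinuousOn gDeriv (Set.Ioi 0) := by
  intro β hβ
  apply ContinuousAt.continuousWithinAt
  apply ContinuousAt.congr (f := fun b => hFun (1/Real.sqrt b))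
  · have h1 : ContinuousAt (fun b : ℝ => 1/Real.sqrt b) β := by
      simp only [one_div]
      exact (Real.continuous_sqrt.continuousAt).inv₀ (Real.sqrt_pos.2 hβ).ne'
    exact hFun_cont.continuousAt.comp h1
  · filter_upwards [isOpen_Ioi.mem_nhds hβ] with b hb
    exact (gDeriv_eq hb).symm

lemma exists_unique_gDeriv {α : ℝ} (hα : 1 < α) : ∃! β : ℝ, 0 < β ∧ gDeriv β = α := by
  obtain ⟨a, hga, ha⟩ :=
    ((gDeriv_tendsto_top.eventually (eventually_ge_atTop α)).and self_mem_nhdsWithin).exists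
  obtain ⟨b, hgb, hab⟩ :=
    ((gDeriv_tendsto_one.eventually_lt_const hα).and (eventually_ge_atTop (a+1))).exists
  have hab' : a ≤ b := by linarith
  have ha0 : 0 < a := ha
  have hsub : Set.Icc a b ⊆ Set.Ioi 0 := fun x hx => lt_of_lt_of_le ha0 hx.1
  obtain ⟨β, hβmem, hβ⟩ := intermediate_value_Icc' hab' (gDeriv_contOn.mono hsub)
    (Set.mem_Icc.2 ⟨hgb.le, hga⟩)
  refine ⟨β, ⟨lt_of_lt_of_le ha0 hβmem.1, hβ⟩, ?_⟩
  intro y hy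
  exact gDeriv_anti.injOn (Set.mem_Ioi.2 hy.1) (Set.mem_Ioi.2 (lt_of_lt_of_le ha0 hβmem.1))
    (hy.2.trans hβ.symm)

theorem gFun_properties :
    (∀ β : ℝ, 0 < β → gFun β =
      Real.sqrt β * (∫ t in (0:ℝ)..(1/Real.sqrt β), Real.exp (-t^2/2))
        + β * Real.exp (-1/(2*β))) ∧
    (∀ β : ℝ, 0 < β → HasDerivAt gFun (gDeriv β) β) ∧
    (∀ β : ℝ, 0 < β → gDeriv β = fFun (1/β) - (1/β) * fDeriv (1/β)) ∧
    StrictAntiOn gDeriv (Set.Ioi 0) ∧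
    Tendsto gDeriv (nhdsWithin 0 (Set.Ioi 0)) atTop ∧
    Tendsto gDeriv atTop (nhds 1) ∧
    ConcaveOn ℝ (Set.Ioi 0) gFun ∧
    (∀ α : ℝ, 1 < α → ∃! β : ℝ, 0 < β ∧ gDeriv β = α) := by
  exact ⟨fun β hβ => gFun_eq hβ, fun β hβ => gFun_hasDerivAt hβ, fun β hβ => part3 hβ,
    gDeriv_anti, gDeriv_tendsto_top, gDeriv_tendsto_one, gFun_concave,
    fun α hα => exists_unique_gDeriv hα⟩
end

section
/- Let X₁,…,X_n, Y₁,…,Y_n be 2n independent random variables uniform on [0,1], and let λ = λ(n) satisfy n/log n ≤ λ ≤ n·log n. Then E[min_{1≤i≤n}(X_i + λY_i)] = (1+o(1))·(λ/n)·(√(n/λ)·∫₀^{√(n/λ)} e^{−t²/2} dt + e^{−n/(2λ)}) as n → ∞, uniformly over all such λ. -/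
open MeasureTheory Filter

open Set intervalIntegral
open scoped ENNReal

/-- The uniform probability measure on `[0,1]`. -/
noncomputable def unif01 : Measure ℝ := volume.restrict (Set.Icc (0:ℝ) 1)

instance : IsProbabilityMeasure unif01 :=
  ⟨by simp [unif01, Real.volume_Icc]⟩

/-! ### The clamp function -/

noncomputable def eta (c : ℝ) : ℝ := max 0 (min 1 (1 - c))

lemma eta_nonneg (c : ℝ) : 0 ≤ eta c := le_max_left _ _
lemma eta_le_one (c : ℝ) : eta c ≤ 1 := max_le zero_le_one (min_le_left _ _)
lemma eta_of_nonpos {c : ℝ} (h : c ≤ 0) : eta c = 1 := by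
  have : min 1 (1-c) = 1 := min_eq_left (by linarith)
  rw [eta, this]; exact max_eq_right zero_le_one
lemma eta_of_mem {c : ℝ} (h0 : 0 ≤ c) (h1 : c ≤ 1) : eta c = 1 - c := by
  rw [eta, min_eq_right (by linarith), max_eq_right (by linarith)]
lemma eta_of_one_le {c : ℝ} (h : 1 ≤ c) : eta c = 0 := by
  rw [eta, min_eq_right (by linarith), max_eq_left (by linarith)]
lemma eta_antitone : Antitone eta := fun a b hab => by
  unfold eta; gcongr
lemma eta_continuous : Continuous eta :=
  continuous_const.max (continuous_const.min (by fun_prop))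

lemma unif01_Ioi (c : ℝ) : unif01 (Set.Ioi c) = ENNReal.ofReal (eta c) := by
  rw [unif01, Measure.restrict_apply measurableSet_Ioi]
  rcases le_or_gt 0 c with hc | hc
  · have : Set.Ioi c ∩ Set.Icc 0 1 = Set.Ioc c 1 := by
      ext x; simp only [mem_inter_iff, mem_Ioi, mem_Icc, mem_Ioc]
      constructor
      · rintro ⟨h1, _, h3⟩; exact ⟨h1, h3⟩
      · rintro ⟨h1, h2⟩; exact ⟨h1, le_of_lt (lt_of_le_of_lt hc h1), h2⟩
    rw [this, Real.volume_Ioc]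
    rcases le_or_gt c 1 with hc1 | hc1
    · rw [eta_of_mem hc hc1]
    · rw [eta_of_one_le hc1.le, ENNReal.ofReal_eq_zero.mpr (by linarith),
        ENNReal.ofReal_eq_zero.mpr (by linarith)]
  · have : Set.Ioi c ∩ Set.Icc 0 1 = Set.Icc 0 1 := by
      apply inter_eq_right.mpr
      intro x hx; exact lt_of_lt_of_le hc hx.1
    rw [this, Real.volume_Icc, eta_of_nonpos hc.le]; norm_num

/-! ### The two-dimensional survival function -/

noncomputable def Sbar (lam s : ℝ) : ℝ≥0∞ :=
  (unif01.prod unif01) {p : ℝ × ℝ | s < p.1 + lam * p.2}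

noncomputable def realSurv (lam s : ℝ) : ℝ := ∫ x in Set.Icc (0:ℝ) 1, eta ((s - x)/lam)

lemma measurableSet_T (lam s : ℝ) : MeasurableSet {p : ℝ × ℝ | s < p.1 + lam * p.2} :=
  measurableSet_lt measurable_const (by fun_prop)

lemma realSurv_nonneg (lam s : ℝ) : 0 ≤ realSurv lam s :=
  integral_nonneg fun _ => eta_nonneg _

lemma integrable_eta_aux (lam s : ℝ) :
    Integrable (fun x => eta ((s - x)/lam)) unif01 := by
  have hc : Continuous fun x : ℝ => eta ((s - x)/lam) := by
    apply eta_continuous.comp; fun_prop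
  refine Integrable.mono' (integrable_const 1) hc.aestronglyMeasurable
    (Filter.Eventually.of_forall fun x => ?_)
  rw [Real.norm_eq_abs, abs_of_nonneg (eta_nonneg _)]; exact eta_le_one _

lemma Sbar_eq (lam s : ℝ) (hlam : 0 < lam) :
    Sbar lam s = ENNReal.ofReal (realSurv lam s) := by
  rw [Sbar, Measure.prod_apply (measurableSet_T lam s)]
  have h1 : ∀ x : ℝ, Prod.mk x ⁻¹' {p : ℝ × ℝ | s < p.1 + lam * p.2} = Set.Ioi ((s - x)/lam) := by
    intro x; ext y
    simp only [mem_preimage, mem_setOf_eq, mem_Ioi, div_lt_iff₀ hlam]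
    constructor <;> intro h <;> nlinarith
  simp_rw [h1, unif01_Ioi]
  rw [realSurv, ← ofReal_integral_eq_lintegral_ofReal (integrable_eta_aux lam s)
    (Filter.Eventually.of_forall fun x => eta_nonneg _)]
  rfl

lemma realSurv_anti {lam : ℝ} (hlam : 0 < lam) : Antitone (realSurv lam) := by
  intro s s' hss
  apply integral_mono (μ := unif01) (integrable_eta_aux lam s') (integrable_eta_aux lam s)
  intro x
  exact eta_antitone (by gcongr <;> linarith)

/-! ### Regime formulas for `realSurv` -/

lemma integral_affine (a b c d : ℝ) :
    ∫ x in a..b, (c + d * x) = c * (b - a) + d * (b^2 - a^2) / 2 := by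
  have h1 : ∀ x ∈ uIcc a b, HasDerivAt (fun x => c * x + d * (x^2/2)) (c + d * x) x := by
    intro x _
    have : HasDerivAt (fun x : ℝ => c * x + d * (x^2/2)) (c * 1 + d * (2 * x^(2-1) * 1/2)) x := by
      exact ((hasDerivAt_id x).const_mul c).add
        ((((hasDerivAt_id x).pow 2).div_const 2).const_mul d)
    convert this using 1; norm_num
  rw [integral_eq_sub_of_hasDerivAt h1 (by apply Continuous.intervalIntegrable; fun_prop)]
  ring

lemma realSurv_eq_intervalIntegral (lam s : ℝ) :
    realSurv lam s = ∫ x in (0:ℝ)..1, eta ((s - x)/lam) := by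
  rw [realSurv, integral_Icc_eq_integral_Ioc, ← integral_of_le (by norm_num : (0:ℝ) ≤ 1)]

lemma intable (lam s a b : ℝ) : IntervalIntegrable (fun x => eta ((s - x)/lam)) volume a b := by
  apply Continuous.intervalIntegrable; exact eta_continuous.comp (by fun_prop)

lemma realSurv_regime1 {lam s : ℝ} (hlam : 1 ≤ lam) (h0 : 0 ≤ s) (h1 : s ≤ 1) :
    realSurv lam s = 1 - s^2/(2*lam) := by
  have hlam0 : (0:ℝ) < lam := by linarith
  rw [realSurv_eq_intervalIntegral,
    ← integral_add_adjacent_intervals (intable lam s 0 s) (intable lam s s 1)]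
  have e1 : ∫ x in (0:ℝ)..s, eta ((s - x)/lam) = ∫ x in (0:ℝ)..s, ((1 - s/lam) + (1/lam) * x) := by
    apply integral_congr; intro x hx
    rw [uIcc_of_le h0] at hx
    show eta ((s - x)/lam) = 1 - s/lam + 1/lam * x
    rw [eta_of_mem (div_nonneg (by linarith [hx.2]) hlam0.le)
      (by rw [div_le_one hlam0]; have := hx.1; linarith)]
    field_simp; ring
  have e2 : ∫ x in s..(1:ℝ), eta ((s - x)/lam) = ∫ _x in s..(1:ℝ), (1:ℝ) := by
    apply integral_congr; intro x hx
    rw [uIcc_of_le h1] at hx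
    show eta ((s - x)/lam) = 1
    exact eta_of_nonpos (div_nonpos_of_nonpos_of_nonneg (by linarith [hx.1]) hlam0.le)
  rw [e1, e2, integral_affine, intervalIntegral.integral_const]
  have : lam ≠ 0 := by positivity
  field_simp
  ring

lemma realSurv_regime2 {lam s : ℝ} (h1 : 1 ≤ s) (h2 : s ≤ lam) :
    realSurv lam s = 1 - (2*s - 1)/(2*lam) := by
  have hlam0 : (0:ℝ) < lam := by linarith
  rw [realSurv_eq_intervalIntegral]
  have e1 : ∫ x in (0:ℝ)..1, eta ((s - x)/lam) = ∫ x in (0:ℝ)..1, ((1 - s/lam) + (1/lam) * x) := by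
    apply integral_congr; intro x hx
    rw [uIcc_of_le (by norm_num : (0:ℝ) ≤ 1)] at hx
    show eta ((s - x)/lam) = 1 - s/lam + 1/lam * x
    rw [eta_of_mem (div_nonneg (by linarith [hx.2]) hlam0.le)
      (by rw [div_le_one hlam0]; have := hx.1; linarith)]
    field_simp; ring
  rw [e1, integral_affine]
  have : lam ≠ 0 := by positivity
  field_simp; ring

lemma realSurv_regime3 {lam s : ℝ} (hlam : 1 ≤ lam) (h1 : lam ≤ s) (h2 : s ≤ lam + 1) :
    realSurv lam s = (lam + 1 - s)^2/(2*lam) := by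
  have hlam0 : (0:ℝ) < lam := by linarith
  rw [realSurv_eq_intervalIntegral,
    ← integral_add_adjacent_intervals (intable lam s 0 (s - lam)) (intable lam s (s - lam) 1)]
  have e1 : ∫ x in (0:ℝ)..(s-lam), eta ((s - x)/lam) = ∫ _x in (0:ℝ)..(s-lam), (0:ℝ) := by
    apply integral_congr; intro x hx
    rw [uIcc_of_le (by linarith)] at hx
    show eta ((s - x)/lam) = 0
    exact eta_of_one_le (by rw [le_div_iff₀ hlam0]; have := hx.2; linarith)
  have e2 : ∫ x in (s-lam)..(1:ℝ), eta ((s - x)/lam)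
      = ∫ x in (s-lam)..(1:ℝ), ((1 - s/lam) + (1/lam) * x) := by
    apply integral_congr; intro x hx
    rw [uIcc_of_le (by linarith)] at hx
    show eta ((s - x)/lam) = 1 - s/lam + 1/lam * x
    rw [eta_of_mem (div_nonneg (by linarith [hx.2]) hlam0.le)
      (by rw [div_le_one hlam0]; have := hx.1; linarith)]
    field_simp; ring
  rw [e1, e2, integral_affine, intervalIntegral.integral_zero]
  have : lam ≠ 0 := by positivity
  field_simp; ring

lemma realSurv_regime4 {lam s : ℝ} (hlam : 0 < lam) (h1 : lam + 1 ≤ s) :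
    realSurv lam s = 0 := by
  rw [realSurv_eq_intervalIntegral]
  have e1 : ∫ x in (0:ℝ)..1, eta ((s - x)/lam) = ∫ _x in (0:ℝ)..1, (0:ℝ) := by
    apply integral_congr; intro x hx
    rw [uIcc_of_le (by norm_num : (0:ℝ) ≤ 1)] at hx
    show eta ((s - x)/lam) = 0
    exact eta_of_one_le (by rw [le_div_iff₀ hlam]; have := hx.2; linarith)
  rw [e1, intervalIntegral.integral_zero]

/-- Product measure modelling `2n` i.i.d. uniform `[0,1]` variables
`X_i = x (i, true)` and `Y_i = x (i, false)`. -/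
noncomputable def pairMeasure (n : ℕ) : Measure (Fin n × Bool → ℝ) :=
  Measure.pi fun _ => unif01

instance (n : ℕ) : IsProbabilityMeasure (pairMeasure n) := by
  unfold pairMeasure; infer_instance

/-! ### Product factorization -/

def Phi (n : ℕ) : (Fin n × Bool → ℝ) → (Fin n → ℝ × ℝ) := fun x i => (x (i, true), x (i, false))

lemma measurePreserving_Phi (n : ℕ) :
    MeasurePreserving (Phi n) (pairMeasure n) (Measure.pi fun _ : Fin n => unif01.prod unif01) := by
  classical
  let p : Fin n × Bool → Prop := fun q => q.2 = true
  have e1 := measurePreserving_piEquivPiSubtypeProd (fun _ : Fin n × Bool => unif01) p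
  let ea : Fin n ≃ {q : Fin n × Bool // p q} :=
    ⟨fun i => ⟨(i, true), rfl⟩, fun q => q.1.1, fun i => rfl,
      fun q => Subtype.ext (Prod.ext rfl q.2.symm)⟩
  let eb : Fin n ≃ {q : Fin n × Bool // ¬ p q} :=
    ⟨fun i => ⟨(i, false), by simp [p]⟩, fun q => q.1.1,
      fun i => rfl,
      fun q => Subtype.ext (by obtain ⟨⟨i,b⟩,hb⟩ := q; simp only [p, Bool.not_eq_true] at hb; simp [hb])⟩
  have e2a := (measurePreserving_piCongrLeft (fun _ : {q : Fin n × Bool // p q} => unif01) ea).symm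
    (MeasurableEquiv.piCongrLeft (fun _ => ℝ) ea)
  have e2b := (measurePreserving_piCongrLeft (fun _ : {q : Fin n × Bool // ¬ p q} => unif01) eb).symm
    (MeasurableEquiv.piCongrLeft (fun _ => ℝ) eb)
  have e3 := (measurePreserving_arrowProdEquivProdArrow ℝ ℝ (Fin n)
    (fun _ => unif01) (fun _ => unif01)).symm
    (MeasurableEquiv.arrowProdEquivProdArrow ℝ ℝ (Fin n))
  have comp := (e3.comp (e2a.prod e2b)).comp e1
  exact comp

lemma iInf_lt_iff' {n : ℕ} [NeZero n] (g : Fin n → ℝ) (t : ℝ) :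
    (t < ⨅ i, g i) ↔ ∀ i, t < g i := by
  rw [← Finset.inf'_univ_eq_ciInf, Finset.lt_inf'_iff]
  simp

lemma pairMeasure_event (n : ℕ) [NeZero n] (lam t : ℝ) :
    pairMeasure n {x | t < ⨅ i : Fin n, (x (i, true) + lam * x (i, false))}
      = (Sbar lam t)^n := by
  have hset : {x : Fin n × Bool → ℝ | t < ⨅ i : Fin n, (x (i, true) + lam * x (i, false))}
      = Phi n ⁻¹' (Set.pi Set.univ fun _ : Fin n => {p : ℝ × ℝ | t < p.1 + lam * p.2}) := by
    ext x
    simp only [mem_setOf_eq, mem_preimage, Set.mem_pi, Set.mem_univ, forall_true_left, Phi]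
    exact iInf_lt_iff' _ t
  rw [hset, (measurePreserving_Phi n).measure_preimage
    (MeasurableSet.univ_pi fun _ => measurableSet_T lam t).nullMeasurableSet,
    Measure.pi_pi]
  simp [Sbar]

/-- `E[min_{1 ≤ i ≤ n} (X_i + λ Y_i)]` for `X_i, Y_i` i.i.d. uniform on `[0,1]`. -/
noncomputable def Emin (n : ℕ) (lam : ℝ) : ℝ :=
  ∫ x, (⨅ i : Fin n, (x (i, true) + lam * x (i, false))) ∂(pairMeasure n)

lemma pairMeasure_box (n : ℕ) :
    ∀ᵐ x ∂(pairMeasure n), ∀ q : Fin n × Bool, x q ∈ Set.Icc (0:ℝ) 1 := by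
  have hB : MeasurableSet (Set.pi Set.univ fun _ : Fin n × Bool => Set.Icc (0:ℝ) 1) :=
    MeasurableSet.univ_pi fun _ => measurableSet_Icc
  have h1 : pairMeasure n (Set.pi Set.univ fun _ : Fin n × Bool => Set.Icc (0:ℝ) 1) = 1 := by
    rw [pairMeasure, Measure.pi_pi]
    have : unif01 (Set.Icc 0 1) = 1 := by
      rw [unif01, Measure.restrict_apply measurableSet_Icc, Set.inter_self, Real.volume_Icc]
      norm_num
    simp [this]
  have h2 : pairMeasure n (Set.pi Set.univ fun _ : Fin n × Bool => Set.Icc (0:ℝ) 1)ᶜ = 0 := by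
    rw [measure_compl hB (measure_ne_top _ _), measure_univ, h1, tsub_self]
  have h3 : ∀ᵐ x ∂(pairMeasure n),
      x ∈ (Set.pi Set.univ fun _ : Fin n × Bool => Set.Icc (0:ℝ) 1) := by
    rw [ae_iff]; exact h2
  filter_upwards [h3] with x hx
  intro q; exact Set.mem_univ_pi.mp hx q

lemma emin_eq (n : ℕ) [NeZero n] (lam : ℝ) (hlam : 0 ≤ lam) :
    Emin n lam = ∫ t in Set.Ioi (0:ℝ), ((Sbar lam t).toReal)^n := by
  classical
  set f : (Fin n × Bool → ℝ) → ℝ :=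
    fun x => ⨅ i : Fin n, (x (i, true) + lam * x (i, false)) with hf
  have hne : (Finset.univ : Finset (Fin n)).Nonempty := Finset.univ_nonempty
  have hfeq : ∀ x, f x = Finset.inf' Finset.univ hne
      (fun i => x (i, true) + lam * x (i, false)) := by
    intro x; rw [hf]; exact (Finset.inf'_univ_eq_ciInf _).symm
  have hcont : Continuous f := by
    have : Continuous fun x : Fin n × Bool → ℝ =>
        Finset.inf' Finset.univ hne (fun i => x (i, true) + lam * x (i, false)) := by
      apply Continuous.finset_inf'_apply
      intro i _
      fun_prop
    simpa only [← hfeq] using this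
  have hbound : ∀ᵐ x ∂(pairMeasure n), ‖f x‖ ≤ 1 + lam := by
    filter_upwards [pairMeasure_box n] with x hx
    have h0 : 0 ≤ f x := by
      rw [hfeq]
      apply Finset.le_inf'
      intro i _
      have := (hx (i, true)).1; have := (hx (i, false)).1
      nlinarith [(hx (i,false)).1]
    have h1 : f x ≤ 1 + lam := by
      rw [hfeq]
      obtain ⟨i⟩ := (inferInstance : Nonempty (Fin n))
      refine le_trans (Finset.inf'_le _ (Finset.mem_univ i)) ?_
      have := (hx (i, true)).2; have := (hx (i, false)).2
      nlinarith [(hx (i,false)).1, (hx (i,false)).2]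
    rw [Real.norm_eq_abs, abs_of_nonneg h0]; exact h1
  have hint : Integrable f (pairMeasure n) :=
    Integrable.mono' (integrable_const (1 + lam)) hcont.aestronglyMeasurable hbound
  have hnn : 0 ≤ᵐ[pairMeasure n] f := by
    filter_upwards [pairMeasure_box n] with x hx
    show (0:ℝ) ≤ f x
    rw [hfeq]
    apply Finset.le_inf'
    intro i _
    nlinarith [(hx (i,true)).1, (hx (i,false)).1]
  rw [Emin, show (∫ x, (⨅ i : Fin n, (x (i, true) + lam * x (i, false))) ∂(pairMeasure n))
      = ∫ x, f x ∂(pairMeasure n) from rfl,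
    hint.integral_eq_integral_meas_lt hnn]
  apply setIntegral_congr_fun measurableSet_Ioi
  intro t _
  show ((pairMeasure n) {x | t < ⨅ i : Fin n, (x (i, true) + lam * x (i, false))}).toReal
    = (Sbar lam t).toReal ^ n
  rw [pairMeasure_event n lam t, ENNReal.toReal_pow]

/-! ### Splitting into three pieces -/

lemma surv_pow_anti {lam : ℝ} (hlam : 0 < lam) (n : ℕ) :
    Antitone (fun s => (realSurv lam s)^n) := fun a b hab =>
  pow_le_pow_left₀ (realSurv_nonneg lam b) (realSurv_anti hlam hab) n

lemma surv_pow_intable {lam : ℝ} (hlam : 0 < lam) (n : ℕ) (a b : ℝ) :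
    IntervalIntegrable (fun s => (realSurv lam s)^n) volume a b :=
  ((surv_pow_anti hlam n).antitoneOn _).intervalIntegrable

lemma split_aux (n : ℕ) [NeZero n] {lam : ℝ} (hlam : 1 ≤ lam) :
    ∫ t in Set.Ioi (0:ℝ), (realSurv lam t)^n
      = (∫ s in (0:ℝ)..1, (1 - s^2/(2*lam))^n)
        + (∫ s in (1:ℝ)..lam, (1 - (2*s-1)/(2*lam))^n)
        + ∫ s in lam..(lam+1), ((lam+1-s)^2/(2*lam))^n := by
  have hlam0 : (0:ℝ) < lam := by linarith
  have hvan : ∀ x ∈ Set.Ioi (0:ℝ) \ Set.Ioc 0 (lam+1), (realSurv lam x)^n = 0 := by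
    intro x hx
    obtain ⟨hx1, hx2⟩ := hx
    rw [Set.mem_Ioc, not_and_or] at hx2
    have hge : lam + 1 ≤ x := by
      rcases hx2 with h | h
      · exact absurd (Set.mem_Ioi.mp hx1) h
      · push_neg at h; linarith
    rw [realSurv_regime4 hlam0 hge]
    exact zero_pow (NeZero.ne n)
  rw [setIntegral_eq_of_subset_of_forall_diff_eq_zero measurableSet_Ioi
    (Set.Ioc_subset_Ioi_self : Set.Ioc (0:ℝ) (lam+1) ⊆ _) hvan,
    ← intervalIntegral.integral_of_le (by linarith : (0:ℝ) ≤ lam + 1),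
    ← intervalIntegral.integral_add_adjacent_intervals (surv_pow_intable hlam0 n 0 1)
      (surv_pow_intable hlam0 n 1 (lam+1)),
    ← intervalIntegral.integral_add_adjacent_intervals (surv_pow_intable hlam0 n 1 lam)
      (surv_pow_intable hlam0 n lam (lam+1))]
  have e1 : ∫ s in (0:ℝ)..1, (realSurv lam s)^n = ∫ s in (0:ℝ)..1, (1 - s^2/(2*lam))^n := by
    apply integral_congr; intro s hs
    rw [uIcc_of_le (by norm_num : (0:ℝ) ≤ 1)] at hs
    show (realSurv lam s)^n = _
    rw [realSurv_regime1 hlam hs.1 hs.2]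
  have e2 : ∫ s in (1:ℝ)..lam, (realSurv lam s)^n = ∫ s in (1:ℝ)..lam, (1 - (2*s-1)/(2*lam))^n := by
    apply integral_congr; intro s hs
    rw [uIcc_of_le (by linarith : (1:ℝ) ≤ lam)] at hs
    show (realSurv lam s)^n = _
    rw [realSurv_regime2 hs.1 hs.2]
  have e3 : ∫ s in lam..(lam+1), (realSurv lam s)^n
      = ∫ s in lam..(lam+1), ((lam+1-s)^2/(2*lam))^n := by
    apply integral_congr; intro s hs
    rw [uIcc_of_le (by linarith : lam ≤ lam + 1)] at hs
    show (realSurv lam s)^n = _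
    rw [realSurv_regime3 hlam hs.1 hs.2]
  rw [e1, e2, e3, add_assoc]

/-! ### Calculus lemmas -/


lemma I2_eval (n : ℕ) {lam : ℝ} (hlam : 1 ≤ lam) :
    ∫ s in (1:ℝ)..lam, (1 - (2*s-1)/(2*lam))^n
      = (lam/(n+1)) * ((1 - 1/(2*lam))^(n+1) - (1/(2*lam))^(n+1)) := by
  have hlam0 : (0:ℝ) < lam := by linarith
  have hl : lam ≠ 0 := ne_of_gt hlam0
  have hd : ∀ s ∈ uIcc (1:ℝ) lam,
      HasDerivAt (fun s => -(lam/(n+1)) * (1 - (2*s-1)/(2*lam))^(n+1))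
        ((1 - (2*s-1)/(2*lam))^n) s := by
    intro s _
    have h1 : HasDerivAt (fun s : ℝ => (2*s-1)/(2*lam)) (1/lam) s := by
      have := (((hasDerivAt_id s).const_mul 2).sub_const 1).div_const (2*lam)
      refine this.congr_deriv ?_
      ring
    have h2 : HasDerivAt (fun s : ℝ => 1 - (2*s-1)/(2*lam)) (-(1/lam)) s := h1.const_sub 1
    have h3 := (h2.pow (n+1)).const_mul (-(lam/(n+1)))
    refine h3.congr_deriv ?_
    have : ((n:ℝ)+1) ≠ 0 := by positivity
    push_cast
    field_simp
  rw [integral_eq_sub_of_hasDerivAt hd (by apply Continuous.intervalIntegrable; fun_prop)]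
  have e1 : 1 - (2*lam-1)/(2*lam) = 1/(2*lam) := by field_simp; ring
  have e2 : 1 - (2*(1:ℝ)-1)/(2*lam) = 1 - 1/(2*lam) := by norm_num
  rw [e1, e2]
  ring

lemma I3_upper (n : ℕ) {lam : ℝ} (hlam : 1 ≤ lam) :
    ∫ s in lam..(lam+1), ((lam+1-s)^2/(2*lam))^n ≤ (1/(2*lam))^n := by
  have hlam0 : (0:ℝ) < lam := by linarith
  have h := intervalIntegral.integral_mono_on (μ := volume) (a := lam) (b := lam+1)
    (f := fun s => ((lam+1-s)^2/(2*lam))^n) (g := fun _ => (1/(2*lam))^n)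
    (by linarith) (by apply Continuous.intervalIntegrable; fun_prop)
    (intervalIntegrable_const)
    (fun x hx => by
      have h1 : (lam+1-x)^2 ≤ 1 := by nlinarith [hx.1, hx.2]
      have h2 : (lam+1-x)^2/(2*lam) ≤ 1/(2*lam) :=
        div_le_div_of_nonneg_right h1 (by positivity) |>.trans_eq rfl
      exact pow_le_pow_left₀ (by positivity) h2 n)
  simpa using h

lemma I3_lower (n : ℕ) {lam : ℝ} (hlam : 1 ≤ lam) :
    0 ≤ ∫ s in lam..(lam+1), ((lam+1-s)^2/(2*lam))^n := by
  have hlam0 : (0:ℝ) < lam := by linarith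
  apply intervalIntegral.integral_nonneg (by linarith)
  intro x _
  positivity

lemma one_sub_le_exp_neg (x : ℝ) : 1 - x ≤ Real.exp (-x) := by
  have := Real.add_one_le_exp (-x)
  linarith

lemma exp_neg_le_one_sub {x : ℝ} (h0 : 0 ≤ x) (h2 : x ≤ 1/2) :
    Real.exp (-(x + 2*x^2)) ≤ 1 - x := by
  have hx1 : (0:ℝ) < 1 - x := by linarith
  have key : Real.exp (-(x/(1-x))) ≤ 1 - x := by
    have hy : (0:ℝ) < 1 + x/(1-x) := by positivity
    have h1 : (1 - x) * (1 + x/(1-x)) = 1 := by field_simp; ring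
    have h2 : Real.exp (-(x/(1-x))) = (Real.exp (x/(1-x)))⁻¹ := Real.exp_neg _
    have h3 : 1 + x/(1-x) ≤ Real.exp (x/(1-x)) := by
      have := Real.add_one_le_exp (x/(1-x)); linarith
    have h4 : (Real.exp (x/(1-x)))⁻¹ ≤ (1 + x/(1-x))⁻¹ := by
      apply inv_anti₀ hy h3
    rw [h2]
    refine h4.trans ?_
    rw [inv_le_iff_one_le_mul₀ hy]
    nlinarith
  refine le_trans (Real.exp_le_exp.mpr ?_) key
  rw [neg_le_neg_iff, div_le_iff₀ hx1]
  nlinarith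

lemma expInt_intable (c a b : ℝ) :
    IntervalIntegrable (fun s : ℝ => Real.exp (-(c * s^2))) volume a b := by
  apply Continuous.intervalIntegrable; fun_prop

lemma I1_upper (n : ℕ) {lam : ℝ} (hlam : 1 ≤ lam) :
    ∫ s in (0:ℝ)..1, (1 - s^2/(2*lam))^n
      ≤ ∫ s in (0:ℝ)..1, Real.exp (-((n:ℝ)/(2*lam) * s^2)) := by
  have hlam0 : (0:ℝ) < lam := by linarith
  apply intervalIntegral.integral_mono_on (by norm_num)
    (by apply Continuous.intervalIntegrable; fun_prop) (expInt_intable _ _ _)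
  intro x hx
  have hx2 : x^2/(2*lam) ≤ 1/2 := by
    have : x^2 ≤ 1 := by nlinarith [hx.1, hx.2]
    rw [div_le_div_iff₀ (by positivity) (by norm_num)]
    nlinarith
  have h1 : (1 - x^2/(2*lam)) ≤ Real.exp (-(x^2/(2*lam))) := one_sub_le_exp_neg _
  have h2 : (1 - x^2/(2*lam))^n ≤ (Real.exp (-(x^2/(2*lam))))^n :=
    pow_le_pow_left₀ (by linarith) h1 n
  refine h2.trans_eq ?_
  rw [← Real.exp_nat_mul]
  congr 1
  ring

lemma I1_lower (n : ℕ) {lam : ℝ} (hlam : 1 ≤ lam) :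
    Real.exp (-((n:ℝ)/(2*lam^2))) * ∫ s in (0:ℝ)..1, Real.exp (-((n:ℝ)/(2*lam) * s^2))
      ≤ ∫ s in (0:ℝ)..1, (1 - s^2/(2*lam))^n := by
  have hlam0 : (0:ℝ) < lam := by linarith
  rw [← intervalIntegral.integral_const_mul]
  apply intervalIntegral.integral_mono_on (by norm_num)
    (by apply Continuous.intervalIntegrable; fun_prop)
    (by apply Continuous.intervalIntegrable; fun_prop)
  intro x hx
  set y := x^2/(2*lam) with hy
  have hy0 : 0 ≤ y := by positivity
  have hy2 : y ≤ 1/2 := by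
    have : x^2 ≤ 1 := by nlinarith [hx.1, hx.2]
    rw [hy, div_le_div_iff₀ (by positivity) (by norm_num)]
    nlinarith
  have key : Real.exp (-(y + 2*y^2)) ≤ 1 - y := exp_neg_le_one_sub hy0 hy2
  have keyn : (Real.exp (-(y + 2*y^2)))^n ≤ (1 - y)^n :=
    pow_le_pow_left₀ (Real.exp_nonneg _) key n
  refine le_trans ?_ keyn
  rw [← Real.exp_nat_mul, ← Real.exp_add]
  apply Real.exp_le_exp.mpr
  have h2y : 2*y^2 ≤ 1/(2*lam^2) := by
    have hx1 : x^2 ≤ 1 := by nlinarith [hx.1, hx.2]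
    have hx4 : (x^2)^2 ≤ 1 := by nlinarith [sq_nonneg (x^2)]
    have e : 2*y^2 = (x^2)^2 * (1/(2*lam^2)) := by rw [hy]; field_simp
    rw [e]
    have hp : (0:ℝ) < 1/(2*lam^2) := by positivity
    nlinarith [hx4, hp]
  have : (n:ℝ) * (2*y^2) ≤ (n:ℝ)/(2*lam^2) := by
    rw [div_eq_mul_inv]
    calc (n:ℝ) * (2*y^2) ≤ (n:ℝ) * (1/(2*lam^2)) := by
          apply mul_le_mul_of_nonneg_left h2y (Nat.cast_nonneg n)
      _ = (n:ℝ) * (2*lam^2)⁻¹ := by rw [one_div]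
  have hyx : (n:ℝ)/(2*lam) * x^2 = (n:ℝ) * y := by rw [hy]; field_simp
  rw [hyx]
  nlinarith [Nat.cast_nonneg (α := ℝ) n]

lemma K1_lower (n : ℕ) {lam : ℝ} (hlam : 1 ≤ lam) :
    Real.exp (-((n:ℝ)/(2*lam)))
      ≤ ∫ s in (0:ℝ)..1, Real.exp (-((n:ℝ)/(2*lam) * s^2)) := by
  have hlam0 : (0:ℝ) < lam := by linarith
  have h := intervalIntegral.integral_mono_on (μ := volume) (a := (0:ℝ)) (b := 1)
    (f := fun _ => Real.exp (-((n:ℝ)/(2*lam)))) (g := fun s => Real.exp (-((n:ℝ)/(2*lam) * s^2)))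
    (by norm_num) intervalIntegrable_const (expInt_intable _ _ _)
    (fun x hx => by
      apply Real.exp_le_exp.mpr
      have : x^2 ≤ 1 := by nlinarith [hx.1, hx.2]
      have hc : (0:ℝ) ≤ (n:ℝ)/(2*lam) := by positivity
      nlinarith)
  simpa using h

lemma K1_pos (n : ℕ) {lam : ℝ} (hlam : 1 ≤ lam) :
    0 < ∫ s in (0:ℝ)..1, Real.exp (-((n:ℝ)/(2*lam) * s^2)) :=
  lt_of_lt_of_le (Real.exp_pos _) (K1_lower n hlam)

lemma denom_eq (n : ℕ) (hn : 0 < n) {lam : ℝ} (hlam : 0 < lam) :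
    (lam/(n:ℝ)) * (Real.sqrt ((n:ℝ)/lam) *
        (∫ t in (0:ℝ)..Real.sqrt ((n:ℝ)/lam), Real.exp (-t^2/2))
        + Real.exp (-((n:ℝ) / (2 * lam))))
      = (∫ s in (0:ℝ)..1, Real.exp (-((n:ℝ)/(2*lam) * s^2)))
        + (lam/(n:ℝ)) * Real.exp (-((n:ℝ)/(2*lam))) := by
  have hn0 : (0:ℝ) < (n:ℝ) := by exact_mod_cast hn
  set a := Real.sqrt ((n:ℝ)/lam) with ha
  have ha0 : 0 < a := Real.sqrt_pos.mpr (by positivity)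
  have ha2 : a^2 = (n:ℝ)/lam := Real.sq_sqrt (by positivity)
  have h := intervalIntegral.integral_comp_mul_left (a := (0:ℝ)) (b := 1)
    (fun t => Real.exp (-t^2/2)) (ne_of_gt ha0)
  rw [mul_zero, mul_one] at h
  have h2 : ∫ t in (0:ℝ)..a, Real.exp (-t^2/2)
      = a * ∫ x in (0:ℝ)..1, Real.exp (-(a*x)^2/2) := by
    have hh : ∫ x in (0:ℝ)..1, Real.exp (-(a*x)^2/2)
        = a⁻¹ • ∫ x in (0:ℝ)..a, Real.exp (-x^2/2) := h
    rw [hh, smul_eq_mul, ← mul_assoc, mul_inv_cancel₀ (ne_of_gt ha0), one_mul]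
  have h3 : ∀ x : ℝ, Real.exp (-(a*x)^2/2) = Real.exp (-((n:ℝ)/(2*lam) * x^2)) := by
    intro x
    congr 1
    rw [mul_pow, ha2]
    ring
  simp_rw [h3] at h2
  rw [h2]
  set K := ∫ x in (0:ℝ)..1, Real.exp (-((n:ℝ)/(2*lam) * x^2)) with hK
  have haa : a*a = (n:ℝ)/lam := by rw [← pow_two]; exact ha2
  rw [show lam/(n:ℝ) * (a * (a * K) + Real.exp (-((n:ℝ)/(2*lam))))
      = lam/(n:ℝ)*((a*a)*K) + lam/(n:ℝ)*Real.exp (-((n:ℝ)/(2*lam))) from by ring, haa]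
  congr 1
  field_simp

/-! ### Combined exact formula -/

lemma emin_formula (n : ℕ) [NeZero n] {lam : ℝ} (hlam : 1 ≤ lam) :
    Emin n lam = (∫ s in (0:ℝ)..1, (1 - s^2/(2*lam))^n)
      + (lam/((n:ℝ)+1)) * ((1 - 1/(2*lam))^(n+1) - (1/(2*lam))^(n+1))
      + ∫ s in lam..(lam+1), ((lam+1-s)^2/(2*lam))^n := by
  have hlam0 : (0:ℝ) < lam := by linarith
  rw [emin_eq n lam (by linarith)]
  have hts : ∀ t : ℝ, (Sbar lam t).toReal = realSurv lam t := fun t => by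
    rw [Sbar_eq lam t hlam0, ENNReal.toReal_ofReal (realSurv_nonneg lam t)]
  simp_rw [hts]
  rw [split_aux n hlam, I2_eval n hlam]

lemma two_log_le {x : ℝ} (hx : 16 ≤ x) : 2 * Real.log x ≤ x := by
  have hx0 : (0:ℝ) < x := by linarith
  have hs : 4 ≤ Real.sqrt x := by
    rw [show (4:ℝ) = Real.sqrt 16 from by
      rw [show (16:ℝ) = 4^2 by norm_num, Real.sqrt_sq (by norm_num)]]
    exact Real.sqrt_le_sqrt hx
  have hlog : Real.log x = 2 * Real.log (Real.sqrt x) := by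
    rw [Real.log_sqrt hx0.le]; ring
  have h1 : Real.log (Real.sqrt x) ≤ Real.sqrt x - 1 :=
    Real.log_le_sub_one_of_pos (by positivity)
  have h2 : Real.sqrt x * Real.sqrt x = x := Real.mul_self_sqrt hx0.le
  nlinarith [hs, h1, h2, hlog]

/-! ### Main theorem -/

set_option maxHeartbeats 1600000 in
theorem Emin_asymp_lam_mid_large (lam : ℕ → ℝ)
    (h : ∀ᶠ n : ℕ in atTop, (n : ℝ) / Real.log n ≤ lam n ∧ lam n ≤ n * Real.log n) :
    Tendsto (fun n : ℕ => Emin n (lam n) /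
      ((lam n / n) * (Real.sqrt (n / lam n) *
        (∫ t in (0:ℝ)..Real.sqrt (n / lam n), Real.exp (-t^2/2))
        + Real.exp (-(n / (2 * lam n))))))
      atTop (nhds 1) := by
  set δ : ℕ → ℝ := fun n => (Real.log n + 2*(Real.log n)^2)/n with hδdef
  set lo : ℕ → ℝ := fun n => ((n:ℝ)/((n:ℝ)+1)) * (Real.exp (-δ n) - 1/n) with hlodef
  set hi : ℕ → ℝ := fun n => 1 + 1/(n:ℝ) with hhidef
  have hδ0 : Tendsto δ atTop (nhds 0) := by
    have t1 : Tendsto (fun x : ℝ => Real.log x ^ 1 / (1*x+0)) atTop (nhds 0) :=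
      Real.tendsto_pow_log_div_mul_add_atTop 1 0 1 one_ne_zero
    have t2 : Tendsto (fun x : ℝ => Real.log x ^ 2 / (1*x+0)) atTop (nhds 0) :=
      Real.tendsto_pow_log_div_mul_add_atTop 1 0 2 one_ne_zero
    have t1' : Tendsto (fun n : ℕ => Real.log n ^ 1 / (1*(n:ℝ)+0)) atTop (nhds 0) :=
      t1.comp tendsto_natCast_atTop_atTop
    have t2' : Tendsto (fun n : ℕ => Real.log n ^ 2 / (1*(n:ℝ)+0)) atTop (nhds 0) :=
      t2.comp tendsto_natCast_atTop_atTop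
    have heq : δ = fun n : ℕ => Real.log (n:ℝ) ^ 1 / (1 * (n:ℝ) + 0)
        + 2 * (Real.log (n:ℝ) ^ 2 / (1 * (n:ℝ) + 0)) := by
      funext n; simp only [hδdef]; ring
    rw [heq]
    convert t1'.add (t2'.const_mul 2) using 2
    norm_num
  have hexp : Tendsto (fun n => Real.exp (-δ n)) atTop (nhds 1) := by
    have hneg : Tendsto (fun n => -δ n) atTop (nhds 0) := by simpa using hδ0.neg
    have := (Real.continuous_exp.tendsto 0).comp hneg
    simpa [Function.comp_def] using this
  have h1n : Tendsto (fun n : ℕ => 1/(n:ℝ)) atTop (nhds 0) :=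
    tendsto_one_div_atTop_nhds_zero_nat
  have hlo_lim : Tendsto lo atTop (nhds 1) := by
    have := (tendsto_natCast_div_add_atTop (1:ℝ)).mul (hexp.sub h1n)
    rw [show (1:ℝ) * (1 - 0) = 1 by norm_num] at this
    exact this
  have hhi_lim : Tendsto hi atTop (nhds 1) := by
    have := tendsto_const_nhds (x := (1:ℝ)) (f := atTop (α := ℕ)) |>.add h1n
    rw [add_zero] at this
    exact this
  have key : ∀ᶠ n : ℕ in atTop,
      lo n ≤ (fun n : ℕ => Emin n (lam n) /
        ((lam n / n) * (Real.sqrt (n / lam n) *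
          (∫ t in (0:ℝ)..Real.sqrt (n / lam n), Real.exp (-t^2/2))
          + Real.exp (-(n / (2 * lam n)))))) n
      ∧ (fun n : ℕ => Emin n (lam n) /
        ((lam n / n) * (Real.sqrt (n / lam n) *
          (∫ t in (0:ℝ)..Real.sqrt (n / lam n), Real.exp (-t^2/2))
          + Real.exp (-(n / (2 * lam n)))))) n ≤ hi n := by
    filter_upwards [h, eventually_ge_atTop 16] with n hn h16
    beta_reduce
    set L := lam n with hLdef
    haveI : NeZero n := ⟨by omega⟩
    have hn16R : (16:ℝ) ≤ (n:ℝ) := by exact_mod_cast h16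
    have hnpos : (0:ℝ) < n := by linarith
    have hnn : (0:ℝ) ≤ n := hnpos.le
    have hlogpos : 0 < Real.log n := Real.log_pos (by linarith)
    have h2ln : 2 * Real.log n ≤ n := two_log_le hn16R
    have hL : (n:ℝ)/Real.log n ≤ L := hn.1
    have hL2 : 2 ≤ L := le_trans (by rw [le_div_iff₀ hlogpos]; linarith) hL
    have hL1 : 1 ≤ L := by linarith
    have hL0 : (0:ℝ) < L := by linarith
    have hinvL : 1/L ≤ Real.log n / n := by
      rw [div_le_div_iff₀ hL0 hnpos]
      have := (div_le_iff₀ hlogpos).mp hL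
      nlinarith
    -- rewrite numerator and denominator
    rw [emin_formula n hL1, denom_eq n (by omega) hL0]
    set I1 := ∫ s in (0:ℝ)..1, (1 - s^2/(2*L))^n with hI1def
    set I3 := ∫ s in L..(L+1), ((L+1-s)^2/(2*L))^n with hI3def
    set K1 := ∫ s in (0:ℝ)..1, Real.exp (-((n:ℝ)/(2*L) * s^2)) with hK1def
    set y := 1/(2*L) with hydef
    set ln := Real.log n with hlndef
    set Eexp := Real.exp (-((n:ℝ)/(2*L))) with hEdef
    have hLne : L ≠ 0 := ne_of_gt hL0
    have hnne : (n:ℝ) ≠ 0 := ne_of_gt hnpos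
    have hy0 : 0 < y := by rw [hydef]; exact one_div_pos.mpr (by linarith)
    have hy4 : y ≤ 1/4 := by
      rw [hydef, div_le_div_iff₀ (by linarith) (by norm_num)]
      linarith
    have hy1 : y ≤ 1 := by linarith
    have hyln : y ≤ ln/(2*n) := by
      rw [hydef, div_le_div_iff₀ (by linarith) (by linarith)]
      calc 1 * (2*(n:ℝ)) = 2 * n * (1/L) * L := by field_simp
        _ ≤ 2 * n * (ln/n) * L := by
            apply mul_le_mul_of_nonneg_right _ hL0.le
            apply mul_le_mul_of_nonneg_left hinvL (by positivity)
        _ = ln * (2*L) := by field_simp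
    have hny : (n:ℝ)*y ≤ ln/2 := by
      calc (n:ℝ)*y ≤ n * (ln/(2*n)) := mul_le_mul_of_nonneg_left hyln hnn
        _ = ln/2 := by field_simp
    have hEy : (n:ℝ)/(2*L) = (n:ℝ)*y := by rw [hydef]; exact (mul_one_div _ _).symm
    have hn4 : (n:ℝ)^2 ≤ 4^n := by
      have h1 : n ≤ 2^n := (Nat.lt_two_pow_self).le
      have h2 : n^2 ≤ (2^n)^2 := Nat.pow_le_pow_left h1 2
      have h3 : (2^n)^2 = 4^n := by
        rw [← pow_mul, mul_comm, pow_mul]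
        norm_num
      calc ((n:ℝ))^2 = ((n^2 : ℕ) : ℝ) := by push_cast; ring
        _ ≤ ((4^n : ℕ) : ℝ) := by exact_mod_cast h2.trans_eq h3
        _ = 4^n := by push_cast; ring
    have hexpny : Real.exp ((n:ℝ)*y) ≤ n := by
      calc Real.exp ((n:ℝ)*y) ≤ Real.exp ln := Real.exp_le_exp.mpr (by linarith)
        _ = n := by rw [hlndef, Real.exp_log hnpos]
    have hFn : y^n * Real.exp ((n:ℝ)*y) ≤ 1/n := by
      have hyp : y^n ≤ (1/4)^n := pow_le_pow_left₀ hy0.le hy4 n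
      have : y^n * Real.exp ((n:ℝ)*y) ≤ (1/4)^n * n := by
        apply mul_le_mul hyp hexpny (Real.exp_nonneg _) (by positivity)
      refine this.trans ?_
      rw [div_pow, one_pow, div_mul_eq_mul_div, div_le_div_iff₀ (by positivity) hnpos]
      nlinarith [hn4]
    have hEexp_pos : 0 < Eexp := Real.exp_pos _
    have hK1pos : 0 < K1 := K1_pos n hL1
    have hK1E : Eexp ≤ K1 := K1_lower n hL1
    have hK2pos : 0 < L/(n:ℝ) * Eexp := mul_pos (div_pos hL0 hnpos) hEexp_pos
    have hDpos : 0 < K1 + L/(n:ℝ) * Eexp := by linarith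
    -- upper bounds
    have hI1up : I1 ≤ K1 := I1_upper n hL1
    have hI2up : (L/((n:ℝ)+1)) * ((1 - y)^(n+1) - y^(n+1)) ≤ L/(n:ℝ) * Eexp := by
      have a1 : (1-y)^(n+1) ≤ Real.exp (-((n:ℝ)*y)) := by
        have := pow_le_pow_left₀ (by linarith : (0:ℝ) ≤ 1 - y) (one_sub_le_exp_neg y) (n+1)
        rw [← Real.exp_nat_mul] at this
        refine this.trans (Real.exp_le_exp.mpr ?_)
        push_cast
        nlinarith [hy0.le, hnn]
      have a3 : (0:ℝ) ≤ y^(n+1) := pow_nonneg hy0.le _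
      calc (L/((n:ℝ)+1)) * ((1 - y)^(n+1) - y^(n+1))
          ≤ (L/((n:ℝ)+1)) * Real.exp (-((n:ℝ)*y)) := by
            apply mul_le_mul_of_nonneg_left _ (div_nonneg hL0.le (by positivity))
            linarith
        _ ≤ (L/(n:ℝ)) * Real.exp (-((n:ℝ)*y)) := by
            apply mul_le_mul_of_nonneg_right _ (Real.exp_nonneg _)
            apply div_le_div_of_nonneg_left hL0.le hnpos (by linarith)
        _ = L/(n:ℝ) * Eexp := by rw [hEdef, hEy]
    have hynE : y^n ≤ (1/n) * Eexp := by
      have : y^n * Real.exp ((n:ℝ)*y) * Real.exp (-((n:ℝ)*y)) ≤ (1/n) * Real.exp (-((n:ℝ)*y)) :=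
        mul_le_mul_of_nonneg_right hFn (Real.exp_nonneg _)
      rw [mul_assoc, ← Real.exp_add, add_neg_cancel, Real.exp_zero, mul_one] at this
      rw [hEdef, hEy]
      exact this
    have hI3up : I3 ≤ (1/n) * K1 := by
      have h1 : I3 ≤ y^n := by
        have := I3_upper n hL1
        rw [← hI3def, ← hydef] at this
        exact this
      refine h1.trans (hynE.trans ?_)
      apply mul_le_mul_of_nonneg_left hK1E (by positivity)
    have hupper : I1 + (L/((n:ℝ)+1)) * ((1 - y)^(n+1) - y^(n+1)) + I3
        ≤ hi n * (K1 + L/(n:ℝ) * Eexp) := by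
      have hK2nn : 0 ≤ L/(n:ℝ) * Eexp := by positivity
      have : hi n = 1 + 1/n := rfl
      rw [this]
      have h1nn : (0:ℝ) ≤ 1/n := by positivity
      have := mul_nonneg h1nn hK2nn
      linarith [hI1up, hI2up, hI3up]
    -- lower bounds
    have hδn : (n:ℝ)/(2*L^2) ≤ δ n := by
      have h1 : (1/L)^2 ≤ (ln/n)^2 := pow_le_pow_left₀ (one_div_nonneg.mpr hL0.le) hinvL 2
      have h2 : (n:ℝ)/(2*L^2) = (n/2) * (1/L)^2 := by
        rw [div_pow, one_pow]
        field_simp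
      have h3 : δ n = (ln + 2*ln^2)/n := rfl
      rw [h2, h3]
      have h4 : (n:ℝ)/2 * ((ln/n)^2) = ln^2/(2*n) := by
        rw [div_pow]; field_simp
      calc (n:ℝ)/2 * (1/L)^2 ≤ (n:ℝ)/2 * ((ln/n)^2) := by
            apply mul_le_mul_of_nonneg_left h1 (by positivity)
        _ = ln^2/(2*n) := h4
        _ ≤ (ln + 2*ln^2)/n := by
            rw [div_le_div_iff₀ (by linarith) hnpos]
            nlinarith [mul_pos hlogpos hnpos, mul_pos (mul_pos hlogpos hlogpos) hnpos]
    have hI1lo : Real.exp (-δ n) * K1 ≤ I1 := by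
      have h1 := I1_lower n hL1
      rw [← hK1def, ← hI1def] at h1
      refine le_trans (mul_le_mul_of_nonneg_right ?_ hK1pos.le) h1
      exact Real.exp_le_exp.mpr (by linarith)
    have hF2 : y + 2*((n:ℝ)+1)*y^2 ≤ δ n := by
      have hn1y : ((n:ℝ)+1)*y ≤ ln := by
        have : ((n:ℝ)+1)*y ≤ (2*n)*y := by
          apply mul_le_mul_of_nonneg_right _ hy0.le
          linarith
        linarith [hny]
      have hprod : ((n:ℝ)*y) * (((n:ℝ)+1)*y) ≤ (ln/2) * ln := by
        apply mul_le_mul hny hn1y (mul_nonneg (by positivity) hy0.le) (by linarith)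
      have h3 : δ n = (ln + 2*ln^2)/n := rfl
      rw [h3, le_div_iff₀ hnpos]
      nlinarith [hy0.le, hlogpos.le]
    have hI2lo : lo n * (L/(n:ℝ) * Eexp) ≤ (L/((n:ℝ)+1)) * ((1 - y)^(n+1) - y^(n+1)) := by
      have c1 : Real.exp (-(((n:ℝ)+1)*(y + 2*y^2))) ≤ (1-y)^(n+1) := by
        have := pow_le_pow_left₀ (Real.exp_nonneg _) (exp_neg_le_one_sub hy0.le (by linarith)) (n+1)
        rw [← Real.exp_nat_mul] at this
        refine le_trans (le_of_eq ?_) this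
        congr 1
        push_cast
        ring
      have c2 : Real.exp (-((n:ℝ)*y)) * Real.exp (-δ n) ≤ Real.exp (-(((n:ℝ)+1)*(y + 2*y^2))) := by
        rw [← Real.exp_add]
        apply Real.exp_le_exp.mpr
        have : ((n:ℝ)+1)*(y + 2*y^2) = (n:ℝ)*y + (y + 2*((n:ℝ)+1)*y^2) + (2*(n:ℝ)*y^2 - 2*n*y^2) := by
          ring
        nlinarith [hF2, sq_nonneg y]
      have c3 : y^(n+1) ≤ (1/n) * Real.exp (-((n:ℝ)*y)) := by
        have h1 : y^(n+1) ≤ y^n := pow_le_pow_of_le_one hy0.le hy1 (by omega)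
        rw [hEdef, hEy] at hynE
        exact h1.trans hynE
      have c4 : (1-y)^(n+1) - y^(n+1)
          ≥ Real.exp (-((n:ℝ)*y)) * (Real.exp (-δ n) - 1/n) := by
        have := sub_le_sub (c2.trans c1) c3
        calc Real.exp (-((n:ℝ)*y)) * (Real.exp (-δ n) - 1/n)
            = Real.exp (-((n:ℝ)*y)) * Real.exp (-δ n) - (1/n) * Real.exp (-((n:ℝ)*y)) := by ring
          _ ≤ (1-y)^(n+1) - y^(n+1) := by linarith
      have c5 : lo n * (L/(n:ℝ) * Eexp)
          = (L/((n:ℝ)+1)) * (Real.exp (-((n:ℝ)*y)) * (Real.exp (-δ n) - 1/n)) := by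
        simp only [hlodef, hEdef, hEy]
        have hn1 : (n:ℝ) + 1 ≠ 0 := by positivity
        field_simp
      rw [c5]
      apply mul_le_mul_of_nonneg_left c4 (div_nonneg hL0.le (by positivity))
    have hI3lo : (0:ℝ) ≤ I3 := I3_lower n hL1
    have hlower : lo n * (K1 + L/(n:ℝ) * Eexp)
        ≤ I1 + (L/((n:ℝ)+1)) * ((1 - y)^(n+1) - y^(n+1)) + I3 := by
      have hlo_le : lo n ≤ Real.exp (-δ n) := by
        have hf1 : (0:ℝ) ≤ (n:ℝ)/((n:ℝ)+1) := by positivity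
        have hf2 : (n:ℝ)/((n:ℝ)+1) ≤ 1 := by
          rw [div_le_one (by positivity)]; linarith
        have he : (0:ℝ) ≤ Real.exp (-δ n) := Real.exp_nonneg _
        have h1nn : (0:ℝ) ≤ 1/n := by positivity
        rw [hlodef]
        nlinarith [mul_le_mul_of_nonneg_right hf2 he, mul_nonneg hf1 h1nn]
      have h1 : lo n * K1 ≤ I1 := by
        refine le_trans ?_ hI1lo
        apply mul_le_mul_of_nonneg_right hlo_le hK1pos.le
      linarith [hI2lo, hI3lo, h1]
    constructor
    · rw [le_div_iff₀ hDpos]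
      exact hlower
    · rw [div_le_iff₀ hDpos]
      exact hupper
  exact tendsto_of_tendsto_of_tendsto_of_le_of_le' hlo_lim hhi_lim
    (key.mono fun n hn => hn.1) (key.mono fun n hn => hn.2)
end

section
/- There exist a constant c > 0 and n₀ such that for all n ≥ n₀ and all λ ≥ 0, if X₁,…,X_n, Y₁,…,Y_n are 2n independent random variables uniform on [0,1], then n·E[min_{1≤i≤n}(X_i + λY_i)] ≥ c·max(1, √(λn)). -/
open MeasureTheory Filter
open scoped ENNReal

instance unif01_prob : IsProbabilityMeasure unif01 := by
  constructor
  simp [unif01, Real.volume_Icc]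

instance pairMeasure_prob (n : ℕ) : IsProbabilityMeasure (pairMeasure n) := by
  unfold pairMeasure
  infer_instance

lemma unif01_Iio_le (a : ℝ) : unif01 (Set.Iio a) ≤ ENNReal.ofReal a := by
  rw [unif01, Measure.restrict_apply measurableSet_Iio]
  calc volume (Set.Iio a ∩ Set.Icc 0 1) ≤ volume (Set.Ico 0 a) := by
        apply measure_mono
        rintro x ⟨h1, h2, _⟩
        exact ⟨h2, h1⟩
    _ = ENNReal.ofReal a := by rw [Real.volume_Ico, sub_zero]

lemma pairMeasure_pair_set (n : ℕ) (i : Fin n) (s t : Set ℝ)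
    (hs : MeasurableSet s) (ht : MeasurableSet t) :
    pairMeasure n {x | x (i, true) ∈ s ∧ x (i, false) ∈ t} = unif01 s * unif01 t := by
  classical
  have hne : ((i, true) : Fin n × Bool) ≠ (i, false) := by simp
  have hset : {x : Fin n × Bool → ℝ | x (i, true) ∈ s ∧ x (i, false) ∈ t}
      = Set.pi Set.univ (fun j =>
          (if j = (i, true) then s else Set.univ) ∩ (if j = (i, false) then t else Set.univ)) := by
    ext x
    simp only [Set.mem_pi, Set.mem_univ, Set.mem_inter_iff, Set.mem_setOf_eq, true_implies]
    constructor
    · rintro ⟨h1, h2⟩ j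
      constructor
      · split
        · next h => rw [h]; exact h1
        · trivial
      · split
        · next h => rw [h]; exact h2
        · trivial
    · intro h
      refine ⟨?_, ?_⟩
      · have := (h (i, true)).1
        simpa using this
      · have := (h (i, false)).2
        simpa using this
  rw [hset, pairMeasure, Measure.pi_pi]
  have hfac : ∀ j : Fin n × Bool,
      unif01 ((if j = (i, true) then s else Set.univ) ∩ (if j = (i, false) then t else Set.univ))
      = (if j = (i, true) then unif01 s else 1) * (if j = (i, false) then unif01 t else 1) := by
    intro j
    by_cases h1 : j = (i, true) <;> by_cases h2 : j = (i, false)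
    · exact absurd (h1 ▸ h2) hne
    · simp [h1, h2]
    · simp [h1, h2]
    · simp [h1, h2, measure_univ]
  simp_rw [hfac]
  rw [Finset.prod_mul_distrib, Finset.prod_ite_eq', Finset.prod_ite_eq']
  simp

lemma pairMeasure_coord_set (n : ℕ) (j : Fin n × Bool) (s : Set ℝ) (hs : MeasurableSet s) :
    pairMeasure n {x | x j ∈ s} = unif01 s := by
  classical
  have hset : {x : Fin n × Bool → ℝ | x j ∈ s}
      = Set.pi Set.univ (fun k => if k = j then s else Set.univ) := by
    ext x
    simp only [Set.mem_pi, Set.mem_univ, Set.mem_setOf_eq, true_implies]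
    constructor
    · intro h k
      split
      · next hk => rw [hk]; exact h
      · trivial
    · intro h
      have := h j
      simpa using this
  rw [hset, pairMeasure, Measure.pi_pi]
  have hfac : ∀ k : Fin n × Bool,
      unif01 (if k = j then s else Set.univ) = if k = j then unif01 s else 1 := by
    intro k
    split <;> simp [measure_univ]
  simp_rw [hfac]
  rw [Finset.prod_ite_eq']
  simp

lemma pairMeasure_ae (n : ℕ) :
    ∀ᵐ x ∂pairMeasure n, ∀ j : Fin n × Bool, x j ∈ Set.Icc (0:ℝ) 1 := by
  rw [ae_all_iff]
  intro j
  rw [ae_iff]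
  have : {x : Fin n × Bool → ℝ | ¬ x j ∈ Set.Icc (0:ℝ) 1}
      = {x : Fin n × Bool → ℝ | x j ∈ (Set.Icc (0:ℝ) 1)ᶜ} := rfl
  rw [this, pairMeasure_coord_set n j _ measurableSet_Icc.compl]
  rw [unif01, Measure.restrict_apply measurableSet_Icc.compl]
  simp

section Main

variable (n : ℕ) (lam T : ℝ)

/-- The summand random variable. -/
private noncomputable def Zf (i : Fin n) : (Fin n × Bool → ℝ) → ℝ :=
  fun x => x (i, true) + lam * x (i, false)

lemma Zf_meas (i : Fin n) : Measurable (Zf n lam i) := by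
  unfold Zf; fun_prop

lemma posPart_integrable (hT : 0 < T) (hlam : 0 ≤ lam) (i : Fin n) :
    Integrable (fun x => max (T - Zf n lam i x) 0) (pairMeasure n) := by
  refine (integrable_const T).mono' ?_ ?_
  · exact (((Zf_meas n lam i).const_sub T).max measurable_const).aestronglyMeasurable
  · filter_upwards [pairMeasure_ae n] with x hx
    have h1 := (hx (i, true)).1
    have h2 := mul_nonneg hlam (hx (i, false)).1
    rw [Real.norm_eq_abs, abs_of_nonneg (le_max_right _ _)]
    apply max_le _ hT.le
    simp only [Zf]
    linarith

lemma integral_posPart_le (hT : 0 < T) (hlam : 0 ≤ lam) (i : Fin n) :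
    ∫ x, max (T - Zf n lam i x) 0 ∂pairMeasure n
      ≤ T * (unif01 (Set.Iio T) * unif01 {y : ℝ | lam * y < T}).toReal := by
  classical
  set t : Set ℝ := {y : ℝ | lam * y < T} with ht_def
  have ht : MeasurableSet t := measurableSet_lt (measurable_const_mul lam) measurable_const
  set A : Set (Fin n × Bool → ℝ) := {x | x (i, true) ∈ Set.Iio T ∧ x (i, false) ∈ t} with hA_def
  have hA : MeasurableSet A := by
    have hA_eq : A = (fun x : Fin n × Bool → ℝ => x (i, true)) ⁻¹' Set.Iio T
        ∩ (fun x : Fin n × Bool → ℝ => x (i, false)) ⁻¹' t := rfl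
    rw [hA_eq]
    exact ((measurable_pi_apply (i, true)) measurableSet_Iio).inter
      ((measurable_pi_apply (i, false)) ht)
  have hpt : ∀ᵐ x ∂pairMeasure n,
      max (T - Zf n lam i x) 0 ≤ A.indicator (fun _ => T) x := by
    filter_upwards [pairMeasure_ae n] with x hx
    by_cases hxA : x ∈ A
    · rw [Set.indicator_of_mem hxA]
      apply max_le _ hT.le
      have h1 := (hx (i, true)).1
      have h2 := mul_nonneg hlam (hx (i, false)).1
      simp only [Zf]; linarith
    · rw [Set.indicator_of_notMem hxA]
      apply max_le _ le_rfl
      have h1 := (hx (i, true)).1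
      have h2 := mul_nonneg hlam (hx (i, false)).1
      simp only [hA_def, Set.mem_setOf_eq, Set.mem_Iio, not_and_or, not_lt] at hxA
      rcases hxA with h | h
      · simp only [Zf]; linarith
      · simp only [ht_def, Set.mem_setOf_eq, not_lt] at h
        simp only [Zf]; linarith
  have hint1 := posPart_integrable n lam T hT hlam i
  have hint2 : Integrable (A.indicator (fun _ => T)) (pairMeasure n) :=
    (integrable_const T).indicator hA
  have := integral_mono_ae hint1 hint2 hpt
  rw [integral_indicator_const _ hA] at this
  rw [smul_eq_mul, mul_comm] at this
  rwa [hA_def, measureReal_def, pairMeasure_pair_set n i _ _ measurableSet_Iio ht] at this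

lemma iInf_integrable (hn : 0 < n) (hlam : 0 ≤ lam) :
    Integrable (fun x => ⨅ i : Fin n, (x (i, true) + lam * x (i, false))) (pairMeasure n) := by
  haveI : Nonempty (Fin n) := Fin.pos_iff_nonempty.mp hn
  refine (integrable_const (1 + lam)).mono' ?_ ?_
  · exact (Measurable.iInf (fun i => Zf_meas n lam i)).aestronglyMeasurable
  · filter_upwards [pairMeasure_ae n] with x hx
    have hbd : ∀ i : Fin n, 0 ≤ x (i, true) + lam * x (i, false) ∧
        x (i, true) + lam * x (i, false) ≤ 1 + lam := by
      intro i
      have h1 := hx (i, true)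
      have h2 := hx (i, false)
      constructor
      · have := mul_nonneg hlam h2.1
        linarith [h1.1]
      · have : lam * x (i, false) ≤ lam * 1 := mul_le_mul_of_nonneg_left h2.2 hlam
        linarith [h1.2]
    rw [Real.norm_eq_abs, abs_le]
    constructor
    · have : (0:ℝ) ≤ ⨅ i : Fin n, (x (i, true) + lam * x (i, false)) :=
        le_ciInf fun i => (hbd i).1
      linarith [mul_nonneg hlam (hx ((Classical.arbitrary (Fin n)), false)).1]
    · calc (⨅ i : Fin n, (x (i, true) + lam * x (i, false)))
          ≤ x ((Classical.arbitrary (Fin n)), true)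
            + lam * x ((Classical.arbitrary (Fin n)), false) :=
            ciInf_le (Set.Finite.bddBelow (Set.finite_range _)) _
        _ ≤ 1 + lam := (hbd _).2

lemma Emin_main_bound (hn : 0 < n) (hT : 0 < T) (hlam : 0 ≤ lam) :
    T - n * (T * (unif01 (Set.Iio T) * unif01 {y : ℝ | lam * y < T}).toReal)
      ≤ Emin n lam := by
  classical
  haveI : Nonempty (Fin n) := Fin.pos_iff_nonempty.mp hn
  set μ := pairMeasure n
  have hint_sum : Integrable (fun x => ∑ i : Fin n, max (T - Zf n lam i x) 0) μ :=
    integrable_finset_sum _ (fun i _ => posPart_integrable n lam T hT hlam i)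
  have hkey : ∀ x : Fin n × Bool → ℝ,
      T - ∑ i : Fin n, max (T - Zf n lam i x) 0
        ≤ ⨅ i : Fin n, (x (i, true) + lam * x (i, false)) := by
    intro x
    apply le_ciInf
    intro j
    have h1 : max (T - Zf n lam j x) 0 ≤ ∑ i : Fin n, max (T - Zf n lam i x) 0 :=
      Finset.single_le_sum (f := fun i => max (T - Zf n lam i x) 0)
        (fun i _ => le_max_right _ 0) (Finset.mem_univ j)
    have h2 : T - Zf n lam j x ≤ max (T - Zf n lam j x) 0 := le_max_left _ _
    have h3 : T - ∑ i : Fin n, max (T - Zf n lam i x) 0 ≤ Zf n lam j x := by linarith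
    exact h3
  have hle : ∫ x, (T - ∑ i : Fin n, max (T - Zf n lam i x) 0) ∂μ ≤ Emin n lam := by
    apply integral_mono_ae ((integrable_const T).sub hint_sum)
      (iInf_integrable n lam hn hlam)
    exact ae_of_all _ hkey
  rw [integral_sub (integrable_const T) hint_sum, integral_const] at hle
  simp only [measureReal_def, measure_univ, ENNReal.toReal_one, one_smul] at hle
  rw [integral_finset_sum _ (fun i _ => posPart_integrable n lam T hT hlam i)] at hle
  have hsum : ∑ i : Fin n, ∫ x, max (T - Zf n lam i x) 0 ∂μ
      ≤ n * (T * (unif01 (Set.Iio T) * unif01 {y : ℝ | lam * y < T}).toReal) := by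
    calc ∑ i : Fin n, ∫ x, max (T - Zf n lam i x) 0 ∂μ
        ≤ ∑ _i : Fin n, T * (unif01 (Set.Iio T) * unif01 {y : ℝ | lam * y < T}).toReal :=
          Finset.sum_le_sum (fun i _ => integral_posPart_le n lam T hT hlam i)
      _ = n * (T * (unif01 (Set.Iio T) * unif01 {y : ℝ | lam * y < T}).toReal) := by
          rw [Finset.sum_const, Finset.card_univ, Fintype.card_fin, nsmul_eq_mul]
  linarith

end Main

theorem Emin_lower_bound :
    ∃ c : ℝ, 0 < c ∧ ∃ n₀ : ℕ, ∀ n : ℕ, n₀ ≤ n → ∀ lam : ℝ, 0 ≤ lam →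
      c * max 1 (Real.sqrt (lam * n)) ≤ (n : ℝ) * Emin n lam := by
  refine ⟨1/4, by norm_num, 1, ?_⟩
  intro n hn lam hlam
  have hn' : 0 < n := hn
  have hnR : (0:ℝ) < n := by exact_mod_cast hn'
  by_cases hcase : lam * n ≤ 1
  · -- small lambda case
    have hmax : max 1 (Real.sqrt (lam * ↑n)) = 1 := by
      rw [max_eq_left]
      exact Real.sqrt_le_one.mpr hcase
    rw [hmax, mul_one]
    set T : ℝ := 1 / (2 * n) with hT_def
    have hT : 0 < T := by positivity
    have hmain := Emin_main_bound n lam T hn' hT hlam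
    have hmeas_bd : (unif01 (Set.Iio T) * unif01 {y : ℝ | lam * y < T}).toReal ≤ T := by
      have h1 : unif01 (Set.Iio T) * unif01 {y : ℝ | lam * y < T} ≤ ENNReal.ofReal T * 1 :=
        mul_le_mul' (unif01_Iio_le T) prob_le_one
      rw [mul_one] at h1
      calc (unif01 (Set.Iio T) * unif01 {y : ℝ | lam * y < T}).toReal
          ≤ (ENNReal.ofReal T).toReal := ENNReal.toReal_mono ENNReal.ofReal_ne_top h1
        _ = T := ENNReal.toReal_ofReal hT.le
    have hEmin : T - n * (T * T) ≤ Emin n lam := by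
      refine le_trans ?_ hmain
      have : (n:ℝ) * (T * (unif01 (Set.Iio T) * unif01 {y : ℝ | lam * y < T}).toReal)
          ≤ n * (T * T) := by
        apply mul_le_mul_of_nonneg_left _ hnR.le
        exact mul_le_mul_of_nonneg_left hmeas_bd hT.le
      linarith
    have hTval : T - n * (T * T) = 1 / (4 * n) := by
      rw [hT_def]
      field_simp
      ring
    rw [hTval] at hEmin
    calc (1:ℝ)/4 = n * (1 / (4 * n)) := by field_simp
      _ ≤ n * Emin n lam := mul_le_mul_of_nonneg_left hEmin hnR.le
  · -- large lambda case
    push_neg at hcase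
    have hlam_pos : 0 < lam := by nlinarith
    have hmax : max 1 (Real.sqrt (lam * ↑n)) = Real.sqrt (lam * n) := by
      rw [max_eq_right]
      rw [show (1:ℝ) = Real.sqrt 1 by simp]
      exact Real.sqrt_le_sqrt hcase.le
    rw [hmax]
    set T : ℝ := Real.sqrt (lam / n) / 2 with hT_def
    have hT : 0 < T := by
      have : 0 < lam / n := by positivity
      rw [hT_def]
      positivity
    have hT2 : T ^ 2 = lam / (4 * n) := by
      rw [hT_def, div_pow, Real.sq_sqrt (by positivity : (0:ℝ) ≤ lam / n)]
      ring
    have hmain := Emin_main_bound n lam T hn' hT hlam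
    -- bound the measure product
    have hset : {y : ℝ | lam * y < T} = Set.Iio (T / lam) := by
      ext y
      simp only [Set.mem_setOf_eq, Set.mem_Iio]
      rw [lt_div_iff₀ hlam_pos, mul_comm]
    have hb : (unif01 (Set.Iio T)).toReal ≤ T := by
      calc (unif01 (Set.Iio T)).toReal ≤ (ENNReal.ofReal T).toReal :=
            ENNReal.toReal_mono ENNReal.ofReal_ne_top (unif01_Iio_le T)
        _ = T := ENNReal.toReal_ofReal hT.le
    have hb1 : (unif01 (Set.Iio T)).toReal ≤ 1 := by
      calc (unif01 (Set.Iio T)).toReal ≤ (1:ℝ≥0∞).toReal :=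
            ENNReal.toReal_mono ENNReal.one_ne_top prob_le_one
        _ = 1 := by simp
    have hc : (unif01 {y : ℝ | lam * y < T}).toReal ≤ T / lam := by
      rw [hset]
      calc (unif01 (Set.Iio (T / lam))).toReal ≤ (ENNReal.ofReal (T / lam)).toReal :=
            ENNReal.toReal_mono ENNReal.ofReal_ne_top (unif01_Iio_le _)
        _ = T / lam := ENNReal.toReal_ofReal (by positivity)
    have hnneg1 : 0 ≤ (unif01 (Set.Iio T)).toReal := ENNReal.toReal_nonneg
    have hnneg2 : 0 ≤ (unif01 {y : ℝ | lam * y < T}).toReal := ENNReal.toReal_nonneg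
    have hprod : (unif01 (Set.Iio T) * unif01 {y : ℝ | lam * y < T}).toReal
        = (unif01 (Set.Iio T)).toReal * (unif01 {y : ℝ | lam * y < T}).toReal :=
      ENNReal.toReal_mul
    -- key arithmetic: n * (T * ab) ≤ T / 4
    have hkey : (n:ℝ) * (T * (unif01 (Set.Iio T) * unif01 {y : ℝ | lam * y < T}).toReal)
        ≤ T / 4 := by
      rw [hprod]
      set a := (unif01 (Set.Iio T)).toReal
      set b := (unif01 {y : ℝ | lam * y < T}).toReal
      by_cases hT1 : T ≤ 1
      · have hab : a * b ≤ T * (T / lam) :=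
          mul_le_mul hb hc hnneg2 hT.le
        have : (n:ℝ) * (T * (a * b)) ≤ n * (T * (T * (T / lam))) := by
          apply mul_le_mul_of_nonneg_left _ hnR.le
          exact mul_le_mul_of_nonneg_left hab hT.le
        refine le_trans this ?_
        have heq : (n:ℝ) * (T * (T * (T / lam))) = T * (n * T ^ 2 / lam) := by
          ring
        rw [heq, hT2]
        have : (n:ℝ) * (lam / (4 * n)) / lam = 1 / 4 := by
          field_simp
        rw [this]
        linarith
      · push_neg at hT1
        have hab : a * b ≤ 1 * (T / lam) :=
          mul_le_mul hb1 hc hnneg2 zero_le_one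
        rw [one_mul] at hab
        have : (n:ℝ) * (T * (a * b)) ≤ n * (T * (T / lam)) := by
          apply mul_le_mul_of_nonneg_left _ hnR.le
          exact mul_le_mul_of_nonneg_left hab hT.le
        refine le_trans this ?_
        have heq : (n:ℝ) * (T * (T / lam)) = n * T ^ 2 / lam := by
          ring
        rw [heq, hT2]
        have h14 : (n:ℝ) * (lam / (4 * n)) / lam = 1 / 4 := by
          field_simp
        rw [h14]
        linarith
    have hEmin : 3 / 4 * T ≤ Emin n lam := by linarith
    have hsqrt : (n:ℝ) * T = Real.sqrt (lam * n) / 2 := by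
      rw [hT_def]
      rw [show lam * (n:ℝ) = lam / n * n ^ 2 by field_simp]
      rw [Real.sqrt_mul (by positivity : (0:ℝ) ≤ lam / n), Real.sqrt_sq hnR.le]
      ring
    calc 1 / 4 * Real.sqrt (lam * n) ≤ 3 / 4 * (Real.sqrt (lam * n) / 2) := by
          have : 0 ≤ Real.sqrt (lam * n) := Real.sqrt_nonneg _
          linarith
      _ = 3 / 4 * ((n:ℝ) * T) := by rw [hsqrt]
      _ = (n:ℝ) * (3 / 4 * T) := by ring
      _ ≤ (n:ℝ) * Emin n lam := mul_le_mul_of_nonneg_left hEmin hnR.le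
end

section
/- There is a universal constant K such that, if F : [n] → [n] is a uniformly random mapping, then the number of cycles of the functional digraph of F (that is, the number of distinct orbits of F restricted to its set of periodic points {x : F^k(x) = x for some k ≥ 1}) is at most K·log n with probability at least 1 − O(n^{−50}); i.e., there exist constants K, C and n₀ such that for all n ≥ n₀, P(number of cycles of F > K·log n) ≤ C·n^{−50}. -/
/-- The number of cycles of the functional digraph of `F : [n] → [n]`, i.e. the number
of distinct orbits of `F` restricted to its set of periodic points. -/
noncomputable def numCycles (n : ℕ) (F : Fin n → Fin n) : ℕ :=
  Set.ncard {O : Set (Fin n) | ∃ x : Fin n,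
    (∃ k : ℕ, 1 ≤ k ∧ F^[k] x = x) ∧ O = {y : Fin n | ∃ m : ℕ, F^[m] x = y}}

namespace RandomMappingAux

variable {n : ℕ}

/-- forward orbit -/
def orb (F : Fin n → Fin n) (x : Fin n) : Set (Fin n) := {y | ∃ m : ℕ, F^[m] x = y}

def isPer (F : Fin n → Fin n) (x : Fin n) : Prop := ∃ k : ℕ, 1 ≤ k ∧ F^[k] x = x

def Orbs (F : Fin n → Fin n) : Set (Set (Fin n)) :=
  {O | ∃ x : Fin n, isPer F x ∧ O = orb F x}

lemma numCycles_eq (F : Fin n → Fin n) : numCycles n F = (Orbs F).ncard := rfl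

lemma self_mem_orb (F : Fin n → Fin n) (x : Fin n) : x ∈ orb F x := ⟨0, rfl⟩

lemma iterate_mem_orb (F : Fin n → Fin n) (x : Fin n) (m : ℕ) : F^[m] x ∈ orb F x := ⟨m, rfl⟩

lemma orb_subset_of_mem {F : Fin n → Fin n} {x y : Fin n} (hy : y ∈ orb F x) :
    orb F y ⊆ orb F x := by
  obtain ⟨m, rfl⟩ := hy
  rintro z ⟨l, rfl⟩
  exact ⟨l + m, (Function.iterate_add_apply F l m x)⟩

lemma mem_orb_rev {F : Fin n → Fin n} {x y : Fin n} (hx : isPer F x) (hy : y ∈ orb F x) :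
    x ∈ orb F y := by
  obtain ⟨m, rfl⟩ := hy
  obtain ⟨k, hk1, hkx⟩ := hx
  have hper : ∀ c : ℕ, F^[c * k] x = x := by
    intro c
    induction c with
    | zero => simp
    | succ c ih => rw [Nat.succ_mul, Function.iterate_add_apply, hkx, ih]
  refine ⟨m * k - m, ?_⟩
  rw [← Function.iterate_add_apply]
  have hle : m ≤ m * k := Nat.le_mul_of_pos_right m hk1
  rw [Nat.sub_add_cancel hle]
  exact hper m

lemma isPer_of_mem_orb {F : Fin n → Fin n} {x y : Fin n} (hx : isPer F x) (hy : y ∈ orb F x) :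
    isPer F y := by
  obtain ⟨m, rfl⟩ := hy
  obtain ⟨k, hk1, hkx⟩ := hx
  exact ⟨k, hk1, by
    rw [← Function.iterate_add_apply, Nat.add_comm, Function.iterate_add_apply, hkx]⟩

lemma orb_eq_of_mem {F : Fin n → Fin n} {x y : Fin n} (hx : isPer F x) (hy : y ∈ orb F x) :
    orb F y = orb F x :=
  le_antisymm (orb_subset_of_mem hy) (orb_subset_of_mem (mem_orb_rev hx hy))

lemma image_orb {F : Fin n → Fin n} {x : Fin n} (hx : isPer F x) :
    F '' orb F x = orb F x := by
  obtain ⟨k, hk1, hkx⟩ := hx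
  ext z
  constructor
  · rintro ⟨y, ⟨m, rfl⟩, rfl⟩
    exact ⟨m + 1, Function.iterate_succ_apply' F m x⟩
  · rintro ⟨m, rfl⟩
    refine ⟨F^[m + k - 1] x, ⟨m + k - 1, rfl⟩, ?_⟩
    rw [← Function.iterate_succ_apply' F (m + k - 1) x]
    have h1 : (m + k - 1).succ = m + k := by omega
    rw [h1, Function.iterate_add_apply, hkx]

lemma orbs_eq_of_inter {F : Fin n → Fin n} {O O' : Set (Fin n)} (hO : O ∈ Orbs F)
    (hO' : O' ∈ Orbs F) {z : Fin n} (hz : z ∈ O) (hz' : z ∈ O') : O = O' := by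
  obtain ⟨x, hx, rfl⟩ := hO
  obtain ⟨y, hy, rfl⟩ := hO'
  rw [← orb_eq_of_mem hx hz, ← orb_eq_of_mem hy hz']

/-- members of an invariant set are periodic with orbit inside the set -/
lemma invariant_structure {F : Fin n → Fin n} {A : Set (Fin n)} (hA : F '' A = A) :
    ∀ a ∈ A, isPer F a ∧ orb F a ⊆ A := by
  have hmaps : Set.MapsTo F A A := fun a ha => hA ▸ Set.mem_image_of_mem F ha
  have hsurj : Set.SurjOn F A A := hA.ge
  have hbij : Set.BijOn F A A := (A.toFinite.surjOn_iff_bijOn_of_mapsTo hmaps).mp hsurj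
  have hinj : Set.InjOn F A := hbij.injOn
  intro a ha
  have hiter : ∀ m : ℕ, F^[m] a ∈ A := by
    intro m
    induction m with
    | zero => exact ha
    | succ m ih => rw [Function.iterate_succ_apply']; exact hmaps ih
  constructor
  · -- pigeonhole
    obtain ⟨i, j, hij, hEq⟩ : ∃ i j : ℕ, i ≠ j ∧ F^[i] a = F^[j] a := by
      obtain ⟨i, j, hij, h⟩ := Finite.exists_ne_map_eq_of_infinite (fun m : ℕ => F^[m] a)
      exact ⟨i, j, hij, h⟩
    wlog hlt : i < j generalizing i j
    · exact this j i hij.symm hEq.symm (by omega)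
    -- strip i applications
    have strip : ∀ i j : ℕ, i < j → F^[i] a = F^[j] a → F^[j - i] a = a := by
      intro i
      induction i with
      | zero => intro j hj h; simpa using h.symm
      | succ i ih =>
        intro j hj h
        obtain ⟨j', rfl⟩ : ∃ j', j = j' + 1 := ⟨j - 1, by omega⟩
        have h' : F (F^[i] a) = F (F^[j'] a) := by
          rw [← Function.iterate_succ_apply' F i a, ← Function.iterate_succ_apply' F j' a]
          exact h
        have := hinj (hiter i) (hiter j') h'
        have hij' : i < j' := by omega
        have := ih j' hij' this
        simpa [Nat.succ_sub_succ] using this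
    exact ⟨j - i, by omega, strip i j hlt hEq⟩
  · rintro y ⟨m, rfl⟩
    exact hiter m

open scoped Classical in
lemma card_invariant_finsets (F : Fin n → Fin n) :
    (Finset.univ.filter (fun A : Finset (Fin n) => F '' (↑A : Set (Fin n)) = (↑A : Set (Fin n)))).card
      = 2 ^ numCycles n F := by
  classical
  have hfin : (Orbs F).Finite := Set.toFinite _
  rw [numCycles_eq, Set.ncard_eq_toFinset_card _ hfin, ← Finset.card_powerset]
  set OrbF : Finset (Set (Fin n)) := hfin.toFinset with hOrbF
  have hmemOrbF : ∀ O : Set (Fin n), O ∈ OrbF ↔ O ∈ Orbs F := by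
    intro O; rw [hOrbF, Set.Finite.mem_toFinset]
  refine Finset.card_bij'
    (fun A _ => OrbF.filter (fun O => O ⊆ ↑A))
    (fun S _ => Finset.univ.filter (fun a => ∃ O ∈ S, a ∈ O))
    (fun A hA => Finset.mem_powerset.mpr (Finset.filter_subset _ _))
    ?_ ?_ ?_
  · -- j S lands in invariant sets
    intro S hS
    rw [Finset.mem_filter]
    refine ⟨Finset.mem_univ _, ?_⟩
    ext z
    simp only [Finset.coe_filter, Finset.mem_univ, true_and, Set.mem_image,
      Set.mem_setOf_eq]
    constructor
    · rintro ⟨a, ⟨O, hOS, haO⟩, rfl⟩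
      have hOOrbs : O ∈ Orbs F := (hmemOrbF O).mp (Finset.mem_powerset.mp hS hOS)
      obtain ⟨x, hx, rfl⟩ := hOOrbs
      have : F a ∈ F '' orb F x := Set.mem_image_of_mem F haO
      rw [image_orb hx] at this
      exact ⟨orb F x, hOS, this⟩
    · rintro ⟨O, hOS, hzO⟩
      have hOOrbs : O ∈ Orbs F := (hmemOrbF O).mp (Finset.mem_powerset.mp hS hOS)
      obtain ⟨x, hx, rfl⟩ := hOOrbs
      have : z ∈ F '' orb F x := by rw [image_orb hx]; exact hzO
      obtain ⟨a, haO, rfl⟩ := this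
      exact ⟨a, ⟨_, hOS, haO⟩, rfl⟩
  · -- left inverse
    intro A hA
    rw [Finset.mem_filter] at hA
    have hinv := hA.2
    ext a
    simp only [Finset.mem_filter, Finset.mem_univ, true_and]
    constructor
    · rintro ⟨O, hO, haO⟩
      have := hO.2 haO
      exact_mod_cast this
    · intro ha
      have ha' : (a : Fin n) ∈ (↑A : Set (Fin n)) := by exact_mod_cast ha
      obtain ⟨hper, horb⟩ := invariant_structure hinv a ha'
      exact ⟨orb F a, ⟨(hmemOrbF _).mpr ⟨a, hper, rfl⟩, horb⟩, self_mem_orb F a⟩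
  · -- right inverse
    intro S hS
    have hSsub := Finset.mem_powerset.mp hS
    ext O
    simp only [Finset.mem_filter]
    constructor
    · rintro ⟨hOF, hsub⟩
      have hOOrbs : O ∈ Orbs F := (hmemOrbF O).mp hOF
      obtain ⟨x, hx, rfl⟩ := hOOrbs
      have hxmem : x ∈ (↑(Finset.univ.filter (fun a => ∃ O' ∈ S, a ∈ O')) : Set (Fin n)) :=
        hsub (self_mem_orb F x)
      simp only [Finset.coe_filter, Finset.mem_univ, true_and, Set.mem_setOf_eq] at hxmem
      obtain ⟨O', hO'S, hxO'⟩ := hxmem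
      have hO'Orbs : O' ∈ Orbs F := (hmemOrbF O').mp (hSsub hO'S)
      rwa [orbs_eq_of_inter ⟨x, hx, rfl⟩ hO'Orbs (self_mem_orb F x) hxO']
    · intro hOS
      refine ⟨hSsub hOS, ?_⟩
      intro a haO
      simp only [Finset.coe_filter, Finset.mem_univ, true_and, Set.mem_setOf_eq]
      exact ⟨O, hOS, haO⟩

open scoped Classical in
lemma card_invariant_functions (A : Finset (Fin n)) :
    (Finset.univ.filter
        (fun F : Fin n → Fin n => F '' (↑A : Set (Fin n)) = (↑A : Set (Fin n)))).card
      = Nat.factorial A.card * n ^ (n - A.card) := by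
  classical
  rw [← Fintype.card_subtype]
  have e : (Equiv.Perm {x : Fin n // x ∈ A}) × ({x : Fin n // x ∉ A} → Fin n) ≃
      {F : Fin n → Fin n // F '' (↑A : Set (Fin n)) = (↑A : Set (Fin n))} := by
    refine Equiv.ofBijective
      (fun p => ⟨fun x => if h : x ∈ A then ↑(p.1 ⟨x, h⟩) else p.2 ⟨x, h⟩, ?_⟩) ⟨?_, ?_⟩
    · -- invariance
      obtain ⟨π, g⟩ := p
      ext z
      constructor
      · rintro ⟨a, ha, rfl⟩
        have ha' : a ∈ A := by exact_mod_cast ha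
        simp only [dif_pos ha']
        exact_mod_cast (π ⟨a, ha'⟩).2
      · intro hz
        have hz' : z ∈ A := by exact_mod_cast hz
        refine ⟨↑(π.symm ⟨z, hz'⟩), by exact_mod_cast (π.symm ⟨z, hz'⟩).2, ?_⟩
        simp only [dif_pos (π.symm ⟨z, hz'⟩).2]
        simp
    · -- injective
      rintro ⟨π, g⟩ ⟨π', g'⟩ h
      have h' := congrArg Subtype.val h
      simp only at h'
      simp only [Prod.mk.injEq]
      constructor
      · ext a
        have := congrFun h' ↑a
        simp only [dif_pos a.2] at this
        exact congrArg Fin.val (Subtype.ext_iff.mp (Subtype.ext this : π a = π' a)) ▸ rfl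
      · ext x
        have := congrFun h' ↑x
        simp only [dif_neg x.2] at this
        exact congrArg Fin.val this
    · -- surjective
      rintro ⟨F, hF⟩
      have himg : Finset.image F A = A := by
        apply Finset.coe_injective
        rw [Finset.coe_image]
        exact hF
      have hinj : Set.InjOn F ↑A := by
        rw [← Finset.card_image_iff]
        rw [himg]
      have hmapsto : ∀ a : {x : Fin n // x ∈ A}, F ↑a ∈ A := by
        intro a
        have : F ↑a ∈ Finset.image F A := Finset.mem_image_of_mem F a.2
        rwa [himg] at this
      have hbij : Function.Bijective
          (fun a : {x : Fin n // x ∈ A} => (⟨F ↑a, hmapsto a⟩ : {x : Fin n // x ∈ A})) := by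
        constructor
        · rintro ⟨a, ha⟩ ⟨b, hb⟩ hab
          have : F a = F b := congrArg Subtype.val hab
          exact Subtype.ext (hinj (by exact_mod_cast ha) (by exact_mod_cast hb) this)
        · rintro ⟨b, hb⟩
          have : b ∈ Finset.image F A := by rwa [himg]
          obtain ⟨a, ha, hab⟩ := Finset.mem_image.mp this
          exact ⟨⟨a, ha⟩, Subtype.ext hab⟩
      refine ⟨⟨Equiv.ofBijective _ hbij, fun x => F ↑x⟩, ?_⟩
      apply Subtype.ext
      funext x
      by_cases hx : x ∈ A
      · simp only [dif_pos hx]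
        rfl
      · simp only [dif_neg hx]
  rw [← Fintype.card_congr e, Fintype.card_prod, Fintype.card_perm, Fintype.card_coe,
    Fintype.card_fun]
  congr 1
  rw [Fintype.card_subtype_compl, Fintype.card_fin, Fintype.card_coe]

open scoped Classical in
lemma sum_two_pow_numCycles_le (n : ℕ) :
    ∑ F : Fin n → Fin n, 2 ^ numCycles n F ≤ (n + 1) * n ^ n := by
  classical
  have step1 : ∑ F : Fin n → Fin n, 2 ^ numCycles n F
      = ∑ F : Fin n → Fin n, (Finset.univ.filter
          (fun A : Finset (Fin n) => F '' (↑A : Set (Fin n)) = (↑A : Set (Fin n)))).card := by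
    refine Finset.sum_congr rfl fun F _ => (card_invariant_finsets F).symm
  have step2 : ∑ F : Fin n → Fin n, (Finset.univ.filter
          (fun A : Finset (Fin n) => F '' (↑A : Set (Fin n)) = (↑A : Set (Fin n)))).card
      = ∑ A : Finset (Fin n), (Finset.univ.filter
          (fun F : Fin n → Fin n => F '' (↑A : Set (Fin n)) = (↑A : Set (Fin n)))).card := by
    simp only [Finset.card_filter]
    exact Finset.sum_comm
  have step3 : ∑ A : Finset (Fin n), (Finset.univ.filter
          (fun F : Fin n → Fin n => F '' (↑A : Set (Fin n)) = (↑A : Set (Fin n)))).card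
      = ∑ A : Finset (Fin n), Nat.factorial A.card * n ^ (n - A.card) := by
    refine Finset.sum_congr rfl fun A _ => card_invariant_functions A
  rw [step1, step2, step3]
  have step4 : ∑ A : Finset (Fin n), Nat.factorial A.card * n ^ (n - A.card)
      = ∑ m ∈ Finset.range (n + 1), (n.choose m) • (Nat.factorial m * n ^ (n - m)) := by
    rw [← Finset.powerset_univ]
    rw [Finset.sum_powerset_apply_card (fun m => Nat.factorial m * n ^ (n - m))]
    simp [Finset.card_univ]
  rw [step4]
  have hterm : ∀ m ∈ Finset.range (n + 1),
      (n.choose m) • (Nat.factorial m * n ^ (n - m)) ≤ n ^ n := by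
    intro m hm
    have hmn : m ≤ n := Nat.lt_succ_iff.mp (Finset.mem_range.mp hm)
    have h1 : n.choose m * Nat.factorial m ≤ n ^ m := by
      have h2 := Nat.descFactorial_le_pow n m
      rwa [Nat.descFactorial_eq_factorial_mul_choose, Nat.mul_comm] at h2
    calc (n.choose m) • (Nat.factorial m * n ^ (n - m))
        = n.choose m * Nat.factorial m * n ^ (n - m) := by rw [smul_eq_mul, Nat.mul_assoc]
      _ ≤ n ^ m * n ^ (n - m) := Nat.mul_le_mul_right _ h1
      _ = n ^ n := by rw [← pow_add]; congr 1; omega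
  calc ∑ m ∈ Finset.range (n + 1), (n.choose m) • (Nat.factorial m * n ^ (n - m))
      ≤ ∑ m ∈ Finset.range (n + 1), n ^ n := Finset.sum_le_sum hterm
    _ = (n + 1) * n ^ n := by rw [Finset.sum_const, Finset.card_range, smul_eq_mul]

end RandomMappingAux


open RandomMappingAux in
/-- A uniformly random mapping `F : [n] → [n]` has at most `K log n` cycles with
probability at least `1 − O(n^{−50})`. -/
theorem random_mapping_few_cycles :
    ∃ K C : ℝ, 0 < K ∧ 0 < C ∧ ∃ n₀ : ℕ, ∀ n : ℕ, n₀ ≤ n →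
      (Nat.card {F : Fin n → Fin n // K * Real.log n < (numCycles n F : ℝ)} : ℝ)
          / (n : ℝ) ^ n
        ≤ C * (n : ℝ) ^ (-(50 : ℝ)) := by
  classical
  refine ⟨100, 2, by norm_num, by norm_num, 1, fun n hn => ?_⟩
  have ha0 : (0:ℝ) < (n:ℝ) := by exact_mod_cast Nat.lt_of_lt_of_le Nat.zero_lt_one hn
  have ha1 : (1:ℝ) ≤ (n:ℝ) := by exact_mod_cast hn
  set a : ℝ := (n:ℝ) with haa
  set N : ℕ := Nat.card {F : Fin n → Fin n // (100:ℝ) * Real.log n < (numCycles n F : ℝ)}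
    with hN
  set c : ℝ := 100 * Real.log 2 with hc
  have hc51 : (51:ℝ) ≤ c := by
    have := Real.log_two_gt_d9
    rw [hc]; nlinarith
  -- step: N * a ^ c ≤ (n + 1) * a ^ n
  have key : (N : ℝ) * a ^ c ≤ ((n:ℝ) + 1) * a ^ n := by
    have hNcard : N = (Finset.univ.filter
        (fun F : Fin n → Fin n => (100:ℝ) * Real.log n < (numCycles n F : ℝ))).card := by
      rw [hN, Nat.card_eq_fintype_card, Fintype.card_subtype]
    have hpow : ∀ F : Fin n → Fin n,
        (100:ℝ) * Real.log n < (numCycles n F : ℝ) →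
        a ^ c ≤ (2:ℝ) ^ (numCycles n F) := by
      intro F hF
      have h2 : a ^ c = (2:ℝ) ^ ((100:ℝ) * Real.log n) := by
        rw [haa, hc, Real.rpow_def_of_pos ha0, Real.rpow_def_of_pos (by norm_num : (0:ℝ) < 2)]
        exact congrArg Real.exp (by ring)
      rw [h2, ← Real.rpow_natCast 2 (numCycles n F)]
      exact Real.rpow_le_rpow_of_exponent_le (by norm_num) (le_of_lt hF)
    calc (N : ℝ) * a ^ c
        = ∑ _F ∈ Finset.univ.filter
            (fun F : Fin n → Fin n => (100:ℝ) * Real.log n < (numCycles n F : ℝ)), a ^ c := by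
          rw [Finset.sum_const, hNcard, nsmul_eq_mul]
      _ ≤ ∑ F ∈ Finset.univ.filter
            (fun F : Fin n → Fin n => (100:ℝ) * Real.log n < (numCycles n F : ℝ)),
            (2:ℝ) ^ (numCycles n F) := by
          refine Finset.sum_le_sum fun F hF => hpow F ?_
          exact (Finset.mem_filter.mp hF).2
      _ ≤ ∑ F : Fin n → Fin n, (2:ℝ) ^ (numCycles n F) := by
          refine Finset.sum_le_sum_of_subset_of_nonneg (Finset.filter_subset _ _) ?_
          intro F _ _
          positivity
      _ ≤ ((n:ℝ) + 1) * a ^ n := by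
          have := sum_two_pow_numCycles_le n
          have hcast : (((∑ F : Fin n → Fin n, 2 ^ numCycles n F : ℕ)) : ℝ)
              ≤ (((n + 1) * n ^ n : ℕ) : ℝ) := by exact_mod_cast this
          push_cast at hcast
          simpa [haa] using hcast
  -- conclude
  have hacpos : (0:ℝ) < a ^ c := Real.rpow_pos_of_pos ha0 c
  have hapow : (0:ℝ) < a ^ n := pow_pos ha0 n
  rw [div_le_iff₀ hapow]
  have h1c : a ^ (1 - c) ≤ a ^ (-(50:ℝ)) :=
    Real.rpow_le_rpow_of_exponent_le ha1 (by linarith)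
  have hn1 : (n:ℝ) + 1 ≤ 2 * a := by rw [haa]; linarith
  have step : ((n:ℝ) + 1) * a ^ n ≤ (2 * a ^ (-(50:ℝ)) * a ^ n) * a ^ c := by
    have e1 : (2 * a ^ (-(50:ℝ)) * a ^ n) * a ^ c = 2 * (a ^ (-(50:ℝ)) * a ^ c) * a ^ n := by
      ring
    have e2 : a ^ (-(50:ℝ)) * a ^ c = a ^ (c - 50) := by
      rw [← Real.rpow_add ha0]
      congr 1
      ring
    have e3 : 2 * a ≤ 2 * a ^ (c - 50) := by
      have : a ^ (1:ℝ) ≤ a ^ (c - 50) :=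
        Real.rpow_le_rpow_of_exponent_le ha1 (by linarith)
      rw [Real.rpow_one] at this
      linarith
    rw [e1, e2]
    have : (n:ℝ) + 1 ≤ 2 * a ^ (c - 50) := le_trans hn1 e3
    nlinarith [hapow.le, this, hapow]
  have : (N : ℝ) * a ^ c ≤ (2 * a ^ (-(50:ℝ)) * a ^ n) * a ^ c := le_trans key step
  have := (mul_le_mul_iff_of_pos_right hacpos).mp this
  linarith
end
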